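/- arXiv:1912.08658 — 5 statements merged into one kernel-verified Lean document; each statement's English description precedes it below -/
import Mathlib

section
/- Let λ ∈ ℂ \ [−1,1] and m, n ∈ ℕ. Let A be the (m+n)×(m+n) matrix with blocks A₁₁ = −T_m[g], A₂₂ = −T_n[g], A₁₂ = A₂₁ᵀ = 𝔤₁𝔤₂ᵀ (the rank-one matrix with entries (𝔤₁)_i(𝔤₂)_j). Then det(λI − A) = det T_m[φ] · det T_n[φ] · (1 − ⟨T_m[φ]⁻¹𝔤₁, 𝔤₁⟩ · ⟨T_n[φ]⁻¹𝔤₂, 𝔤₂⟩). -/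
open scoped Matrix

/-- Fourier coefficients of the symbol `g`: `g l = 0` for even `l`,
    `g l = (−1)^((l−1)/2) · 2/(lπ)` for odd `l`. -/
noncomputable def gcoef (l : ℤ) : ℂ :=
  if Even l then 0 else ((-1 : ℝ) ^ ((l - 1) / 2) * 2 / (l * Real.pi) : ℝ)

/-- The Toeplitz matrix `T_m[φ] = λ I + T_m[g]` of the symbol `φ = g + λ`. -/
noncomputable def Tphi (lam : ℂ) (m : ℕ) : Matrix (Fin m) (Fin m) ℂ :=
  Matrix.of fun j k => (if j = k then lam else 0) + gcoef ((j : ℤ) - (k : ℤ))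

/-- The vector `𝔤₁ = (g_{−m}, g_{−m+1}, …, g_{−1})ᵀ ∈ ℂ^m`. -/
noncomputable def gvec1 (m : ℕ) : Fin m → ℂ := fun j => gcoef ((j : ℤ) - (m : ℤ))

/-- The vector `𝔤₂ = (g_{−1}, g_{−2}, …, g_{−n})ᵀ ∈ ℂ^n`. -/
noncomputable def gvec2 (n : ℕ) : Fin n → ℂ := fun j => gcoef (-(j : ℤ) - 1)

/-- The bilinear pairing `⟨a, b⟩ = Σ_j a_j b_j`. -/
noncomputable def pairing {m : ℕ} (a b : Fin m → ℂ) : ℂ := ∑ j, a j * b j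

/-- The matrix `A` with blocks `A₁₁ = −T_m[g]`, `A₂₂ = −T_n[g]`,
    `A₁₂ = A₂₁ᵀ = 𝔤₁𝔤₂ᵀ`. (Here `−T_m[g] = −(T_m[φ] − λ I)`.) -/
noncomputable def Amat (m n : ℕ) : Matrix (Fin m ⊕ Fin n) (Fin m ⊕ Fin n) ℂ :=
  Matrix.fromBlocks
    (-(Tphi 0 m)) (Matrix.vecMulVec (gvec1 m) (gvec2 n))
    (Matrix.vecMulVec (gvec2 n) (gvec1 m)) (-(Tphi 0 n))


open Real intervalIntegral


noncomputable def ee (l : ℤ) (θ : ℝ) : ℂ := Complex.exp ((l : ℂ) * Complex.I * θ)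

lemma ee_cont (l : ℤ) : Continuous (ee l) :=
  Complex.continuous_exp.comp (by continuity)

lemma ee_intble (l : ℤ) (a b : ℝ) :
    IntervalIntegrable (ee l) MeasureTheory.volume a b :=
  (ee_cont l).intervalIntegrable _ _

lemma ee_mul (j k : ℤ) (θ : ℝ) : ee j θ * ee k θ = ee (j + k) θ := by
  rw [ee, ee, ee, ← Complex.exp_add]
  congr 1
  push_cast
  ring

lemma conj_ee (l : ℤ) (θ : ℝ) : (starRingEnd ℂ) (ee l θ) = ee (-l) θ := by
  rw [ee, ee, ← Complex.exp_conj]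
  congr 1
  simp [map_mul, Complex.conj_I, Complex.conj_ofReal]

lemma ee_zero (θ : ℝ) : ee 0 θ = 1 := by simp [ee]

lemma exp_aux (k : ℤ) : Complex.exp ((k : ℂ) * (((π/2 : ℝ)) : ℂ) * Complex.I) = Complex.I ^ k := by
  rw [mul_assoc, Complex.exp_int_mul]
  congr 1
  rw [Complex.exp_mul_I]
  norm_num [← Complex.ofReal_cos, ← Complex.ofReal_sin, Real.cos_pi_div_two, Real.sin_pi_div_two]

lemma integral_ee (l : ℤ) (hl : l ≠ 0) (a b : ℝ) :
    (∫ θ in a..b, ee l θ) =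
      (Complex.exp ((l : ℂ) * Complex.I * b) - Complex.exp ((l : ℂ) * Complex.I * a)) /
        ((l : ℂ) * Complex.I) := by
  have hc : ((l : ℂ) * Complex.I) ≠ 0 := by
    simp [Complex.I_ne_zero, hl]
  exact integral_exp_mul_complex hc

lemma zpow_I_four_mul (l : ℤ) : Complex.I ^ (4 * l) = 1 := by
  rw [zpow_mul]
  have h4 : Complex.I ^ (4 : ℤ) = 1 := by
    rw [show (4 : ℤ) = ((4 : ℕ) : ℤ) from rfl, zpow_natCast, Complex.I_pow_four]
  rw [h4, one_zpow]

lemma I_zpow_three_mul (l : ℤ) : Complex.I ^ (3 * l) = Complex.I ^ (-l) := by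
  have h : 3 * l = 4 * l + -l := by ring
  rw [h, zpow_add₀ Complex.I_ne_zero, zpow_I_four_mul, one_mul]

lemma endpoint_pi2 (l : ℤ) :
    Complex.exp ((l : ℂ) * Complex.I * ((π/2 : ℝ) : ℂ)) = Complex.I ^ l := by
  rw [← exp_aux l]; ring_nf

lemma endpoint_neg_pi2 (l : ℤ) :
    Complex.exp ((l : ℂ) * Complex.I * ((-(π/2) : ℝ) : ℂ)) = Complex.I ^ (-l) := by
  rw [← exp_aux (-l)]; congr 1; push_cast; ring

lemma endpoint_3pi2 (l : ℤ) :
    Complex.exp ((l : ℂ) * Complex.I * ((3 * π/2 : ℝ) : ℂ)) = Complex.I ^ (3 * l) := by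
  rw [← exp_aux (3 * l)]; congr 1; push_cast; ring

lemma integral_ee_full (l : ℤ) :
    (∫ θ in (-(π/2) : ℝ)..(3 * π/2), ee l θ) = if l = 0 then (2 * (π : ℂ)) else 0 := by
  by_cases hl : l = 0
  · subst hl
    simp only [ee_zero, if_true]
    rw [intervalIntegral.integral_const]
    simp [Complex.real_smul]
    ring
  · rw [if_neg hl, integral_ee l hl, endpoint_3pi2, endpoint_neg_pi2, I_zpow_three_mul,
      sub_self, zero_div]



lemma I_zpow_two_mul (k : ℤ) : Complex.I ^ (2 * k) = (-1 : ℂ) ^ k := by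
  rw [zpow_mul]
  congr 1
  rw [show (2 : ℤ) = ((2 : ℕ) : ℤ) from rfl, zpow_natCast, sq, Complex.I_mul_I]

lemma neg_one_zpow_neg (k : ℤ) : (-1 : ℂ) ^ (-k) = (-1 : ℂ) ^ k := by
  rw [zpow_neg, ← inv_zpow, inv_neg_one]

lemma F_sub_G (l : ℤ) :
    (∫ θ in (-(π/2) : ℝ)..(π/2), ee l θ) - (∫ θ in ((π/2) : ℝ)..(3 * π/2), ee l θ)
      = 2 * (π : ℂ) * gcoef l := by
  rcases Int.even_or_odd l with ⟨k, hk⟩ | ⟨k, hk⟩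
  · have hg : gcoef l = 0 := by rw [gcoef, if_pos ⟨k, hk⟩]
    rw [hg, mul_zero]
    by_cases h0 : l = 0
    · subst h0
      simp only [ee_zero]
      rw [intervalIntegral.integral_const, intervalIntegral.integral_const]
      have : (π/2 : ℝ) - -(π/2) = 3 * π/2 - π/2 := by ring
      rw [this, sub_self]
    · rw [integral_ee l h0, integral_ee l h0, endpoint_pi2, endpoint_neg_pi2, endpoint_3pi2,
        I_zpow_three_mul]
      have h2 : l = 2 * k := by omega
      have : Complex.I ^ l = Complex.I ^ (-l) := by
        rw [h2, show -(2*k) = 2*(-k) by ring, I_zpow_two_mul, I_zpow_two_mul, neg_one_zpow_neg]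
      rw [this]
      simp
  · have h0 : l ≠ 0 := by omega
    rw [integral_ee l h0, integral_ee l h0, endpoint_pi2, endpoint_neg_pi2, endpoint_3pi2,
      I_zpow_three_mul]
    have hIl : Complex.I ^ l = (-1 : ℂ) ^ k * Complex.I := by
      rw [hk, zpow_add₀ Complex.I_ne_zero, I_zpow_two_mul, zpow_one]
    have hIml : Complex.I ^ (-l) = (-1 : ℂ) ^ k * (-Complex.I) := by
      rw [hk, show -(2*k+1) = 2*(-k) + (-1) by ring, zpow_add₀ Complex.I_ne_zero,
        I_zpow_two_mul, neg_one_zpow_neg, zpow_neg_one, Complex.inv_I]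
    rw [hIl, hIml]
    have hg : gcoef l = (((-1 : ℝ) ^ k * 2 / (l * Real.pi) : ℝ) : ℂ) := by
      rw [gcoef, if_neg (by rw [hk, Int.even_iff]; omega), show (l - 1) / 2 = k by omega]
    rw [hg]
    have hlC : (l : ℂ) ≠ 0 := Int.cast_ne_zero.mpr h0
    have hpi : (π : ℂ) ≠ 0 := Complex.ofReal_ne_zero.mpr Real.pi_ne_zero
    rw [div_sub_div_same]
    push_cast
    have hnum : ((-1:ℂ) ^ k * Complex.I - (-1:ℂ) ^ k * -Complex.I) -
        ((-1:ℂ) ^ k * -Complex.I - (-1:ℂ) ^ k * Complex.I) = ((4 * (-1:ℂ)^k) * Complex.I) := by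
      ring
    rw [hnum]
    field_simp
    ring

noncomputable def pp {mm : ℕ} (x : Fin mm → ℂ) (θ : ℝ) : ℂ := ∑ k, x k * ee (-(k : ℤ)) θ

lemma pp_cont {mm : ℕ} (x : Fin mm → ℂ) : Continuous (pp x) :=
  continuous_finset_sum _ fun k _ => continuous_const.mul (ee_cont _)

lemma pp_expand {mm : ℕ} (x : Fin mm → ℂ) (θ : ℝ) :
    pp x θ * (starRingEnd ℂ) (pp x θ)
      = ∑ j, ∑ k, (starRingEnd ℂ) (x j) * x k * ee ((j : ℤ) - (k : ℤ)) θ := by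
  rw [pp, map_sum, Finset.sum_mul_sum, Finset.sum_comm]
  refine Finset.sum_congr rfl fun j _ => Finset.sum_congr rfl fun k _ => ?_
  rw [map_mul, conj_ee, neg_neg, show ((j : ℤ) - (k : ℤ)) = (j : ℤ) + -(k : ℤ) by ring,
    ← ee_mul]
  ring

lemma intble_term {mm : ℕ} (x : Fin mm → ℂ) (j k : Fin mm) (a b : ℝ) :
    IntervalIntegrable (fun θ => (starRingEnd ℂ) (x j) * x k * ee ((j : ℤ) - (k : ℤ)) θ)
      MeasureTheory.volume a b :=
  (ee_intble _ a b).const_mul _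

lemma integral_pp {mm : ℕ} (x : Fin mm → ℂ) (a b : ℝ) :
    (∫ θ in a..b, pp x θ * (starRingEnd ℂ) (pp x θ))
      = ∑ j, ∑ k, (starRingEnd ℂ) (x j) * x k * ∫ θ in a..b, ee ((j : ℤ) - (k : ℤ)) θ := by
  simp_rw [pp_expand]
  rw [intervalIntegral.integral_finset_sum
    (f := fun j (θ : ℝ) => ∑ k : Fin mm, (starRingEnd ℂ) (x j) * x k * ee ((j : ℤ) - (k : ℤ)) θ)
    (fun j _ => (continuous_finset_sum _ fun k _ =>
      continuous_const.mul (ee_cont _)).intervalIntegrable a b)]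
  refine Finset.sum_congr rfl fun j _ => ?_
  rw [intervalIntegral.integral_finset_sum (fun k _ => intble_term x j k a b)]
  exact Finset.sum_congr rfl fun k _ => intervalIntegral.integral_const_mul _ _

lemma integral_pp_ofReal {mm : ℕ} (x : Fin mm → ℂ) (a b : ℝ) :
    (∫ θ in a..b, pp x θ * (starRingEnd ℂ) (pp x θ))
      = ((∫ θ in a..b, Complex.normSq (pp x θ) : ℝ) : ℂ) := by
  simp_rw [Complex.mul_conj]
  exact intervalIntegral.integral_ofReal

lemma quad_bound {mm : ℕ} (x : Fin mm → ℂ) :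
    ∃ r : ℝ, (∑ j : Fin mm, ∑ k : Fin mm, (starRingEnd ℂ) (x j) * gcoef ((j : ℤ) - (k : ℤ)) * x k) = (r : ℂ) ∧
      |r| ≤ ∑ j, Complex.normSq (x j) := by
  set I1 : ℝ := ∫ θ in (-(π/2) : ℝ)..(π/2), Complex.normSq (pp x θ) with hI1
  set I2 : ℝ := ∫ θ in ((π/2) : ℝ)..(3 * π/2), Complex.normSq (pp x θ) with hI2
  have hpi : (0 : ℝ) < π := Real.pi_pos
  have h1nn : 0 ≤ I1 := intervalIntegral.integral_nonneg (by linarith)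
    (fun u _ => Complex.normSq_nonneg _)
  have h2nn : 0 ≤ I2 := intervalIntegral.integral_nonneg (by linarith)
    (fun u _ => Complex.normSq_nonneg _)
  -- the quadratic form equals (I1 - I2) / (2π)
  have hcont : Continuous fun θ : ℝ => pp x θ * (starRingEnd ℂ) (pp x θ) :=
    (pp_cont x).mul ((Complex.continuous_conj).comp (pp_cont x))
  have hQ : (∑ j : Fin mm, ∑ k : Fin mm, (starRingEnd ℂ) (x j) * gcoef ((j : ℤ) - (k : ℤ)) * x k)
      * (2 * (π : ℂ)) = ((I1 : ℂ) - (I2 : ℂ)) := by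
    rw [hI1, hI2, ← integral_pp_ofReal, ← integral_pp_ofReal, integral_pp, integral_pp,
      ← Finset.sum_sub_distrib, Finset.sum_mul]
    refine Finset.sum_congr rfl fun j _ => ?_
    rw [← Finset.sum_sub_distrib, Finset.sum_mul]
    refine Finset.sum_congr rfl fun k _ => ?_
    rw [← mul_sub, F_sub_G]
    ring
  -- the sum I1 + I2 equals 2π times the norm
  have hfull : (∫ θ in (-(π/2) : ℝ)..(3 * π/2), pp x θ * (starRingEnd ℂ) (pp x θ))
      = ((I1 + I2 : ℝ) : ℂ) := by
    push_cast
    rw [hI1, hI2, ← integral_pp_ofReal, ← integral_pp_ofReal,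
      ← intervalIntegral.integral_add_adjacent_intervals
        (hcont.intervalIntegrable _ _) (hcont.intervalIntegrable _ _)]
  have hS : I1 + I2 = 2 * π * ∑ j, Complex.normSq (x j) := by
    have h2 : (∫ θ in (-(π/2) : ℝ)..(3 * π/2), pp x θ * (starRingEnd ℂ) (pp x θ))
        = ((2 * π * ∑ j, Complex.normSq (x j) : ℝ) : ℂ) := by
      rw [integral_pp]
      have : ∀ j : Fin mm, ∑ k : Fin mm,
          ((starRingEnd ℂ) (x j) * x k * ∫ θ in (-(π/2) : ℝ)..(3 * π/2), ee ((j : ℤ) - (k : ℤ)) θ)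
          = 2 * (π : ℂ) * Complex.normSq (x j) := by
        intro j
        rw [Finset.sum_eq_single j]
        · rw [sub_self, integral_ee_full, if_pos rfl, Complex.normSq_eq_conj_mul_self]
          ring
        · intro k _ hkj
          rw [integral_ee_full, if_neg, mul_zero]
          intro h
          exact hkj (by
            have : (k : ℤ) = (j : ℤ) := by omega
            exact_mod_cast Fin.ext (by exact_mod_cast this))
        · intro h
          exact absurd (Finset.mem_univ j) h
      simp_rw [this]
      rw [← Finset.mul_sum]
      push_cast
      ring
    have := hfull.symm.trans h2
    exact_mod_cast this
  refine ⟨(I1 - I2) / (2 * π), ?_, ?_⟩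
  · have h2pi : (2 * (π : ℂ)) ≠ 0 := by
      simp [Complex.ofReal_ne_zero, Real.pi_ne_zero]
    have h := (eq_div_iff h2pi).mpr hQ
    rw [h]
    push_cast
    ring
  · rw [abs_div, abs_of_pos (by positivity : (0:ℝ) < 2 * π), div_le_iff₀ (by positivity)]
    calc |I1 - I2| ≤ I1 + I2 := by
          rw [abs_sub_le_iff]; constructor <;> linarith
      _ = (∑ j, Complex.normSq (x j)) * (2 * π) := by rw [hS]; ring








lemma pairing_eq_dot {m : ℕ} (a b : Fin m → ℂ) : pairing a b = a ⬝ᵥ b := rfl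

lemma Tphi_det_isUnit (lam : ℂ) (hlam : lam ∉ (Complex.ofReal '' Set.Icc (-1 : ℝ) 1))
    (mm : ℕ) : IsUnit (Tphi lam mm).det := by
  rw [isUnit_iff_ne_zero]
  intro hdet
  obtain ⟨v, hv0, hMv⟩ := (Matrix.exists_mulVec_eq_zero_iff).mpr hdet
  set S : ℝ := ∑ j, Complex.normSq (v j) with hSdef
  have hSpos : 0 < S := by
    obtain ⟨j, hj⟩ := Function.ne_iff.mp hv0
    refine Finset.sum_pos' (fun i _ => Complex.normSq_nonneg _)
      ⟨j, Finset.mem_univ j, Complex.normSq_pos.mpr (by simpa using hj)⟩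
  obtain ⟨r, hr, hrle⟩ := quad_bound v
  have hrow : ∀ j : Fin mm, (∑ k : Fin mm, gcoef ((j : ℤ) - (k : ℤ)) * v k) = -(lam * v j) := by
    intro j
    have h := congrFun hMv j
    simp only [Matrix.mulVec, dotProduct, Tphi, Matrix.of_apply, add_mul,
      Finset.sum_add_distrib, ite_mul, zero_mul, Finset.sum_ite_eq, Finset.mem_univ,
      if_true, Pi.zero_apply] at h
    linear_combination h
  have hQ : ((r : ℝ) : ℂ) = -lam * (S : ℂ) := by
    rw [← hr]
    calc (∑ j : Fin mm, ∑ k : Fin mm, (starRingEnd ℂ) (v j) * gcoef ((j : ℤ) - (k : ℤ)) * v k)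
        = ∑ j : Fin mm, (starRingEnd ℂ) (v j) * ∑ k : Fin mm, gcoef ((j : ℤ) - (k : ℤ)) * v k := by
          refine Finset.sum_congr rfl fun j _ => ?_
          rw [Finset.mul_sum]
          exact Finset.sum_congr rfl fun k _ => by ring
      _ = ∑ j : Fin mm, -lam * ((starRingEnd ℂ) (v j) * v j) := by
          refine Finset.sum_congr rfl fun j _ => ?_
          rw [hrow j]
          ring
      _ = -lam * (S : ℂ) := by
          rw [← Finset.mul_sum, hSdef]
          push_cast
          congr 1
          exact Finset.sum_congr rfl fun j _ => (Complex.normSq_eq_conj_mul_self).symm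
  have hSne : ((S : ℝ) : ℂ) ≠ 0 := by
    exact_mod_cast Complex.ofReal_ne_zero.mpr (ne_of_gt hSpos)
  have hlamval : lam = ((-(r / S) : ℝ) : ℂ) := by
    have hc : ((-(r / S) : ℝ) : ℂ) = -(((r : ℝ) : ℂ) / ((S : ℝ) : ℂ)) := by push_cast; ring
    rw [hc, hQ, neg_mul, neg_div, neg_neg, mul_div_cancel_right₀ _ hSne]
  apply hlam
  have h1 : |r / S| ≤ 1 := by
    rw [abs_div, abs_of_pos hSpos]
    exact (div_le_one hSpos).mpr hrle
  have h2 := abs_le.mp h1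
  exact ⟨-(r / S), ⟨by linarith [h2.2], by linarith [h2.1]⟩, hlamval.symm⟩

lemma mul_vecMulVec {n' : ℕ} (X : Matrix (Fin n') (Fin n') ℂ) (u : Fin n' → ℂ)
    {p : ℕ} (v : Fin p → ℂ) :
    X * Matrix.vecMulVec u v = Matrix.vecMulVec (X *ᵥ u) v := by
  ext i j
  simp only [Matrix.mul_apply, Matrix.vecMulVec_apply, Matrix.mulVec, dotProduct,
    Finset.sum_mul]
  exact Finset.sum_congr rfl fun k _ => by ring

lemma vecMulVec_mul_vecMulVec {p q s : ℕ} (a : Fin p → ℂ) (b : Fin q → ℂ) (c : Fin q → ℂ)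
    (d : Fin s → ℂ) :
    Matrix.vecMulVec a b * Matrix.vecMulVec c d = (b ⬝ᵥ c) • Matrix.vecMulVec a d := by
  ext i j
  simp only [Matrix.mul_apply, Matrix.vecMulVec_apply, Matrix.smul_apply, dotProduct,
    smul_eq_mul, Finset.sum_mul]
  exact Finset.sum_congr rfl fun k _ => by ring

lemma smul_vecMulVec {p q : ℕ} (t : ℂ) (u : Fin p → ℂ) (v : Fin q → ℂ) :
    Matrix.vecMulVec (t • u) v = t • Matrix.vecMulVec u v := by
  ext i j
  simp [Matrix.vecMulVec_apply, smul_eq_mul, mul_assoc]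

lemma det_unit_one_add {nn : ℕ} (v u : Fin nn → ℂ) (X : Matrix (Fin nn) (Fin nn) ℂ) :
    (1 + Matrix.replicateRow Unit v * X * Matrix.replicateCol Unit u).det = 1 + v ⬝ᵥ (X *ᵥ u) := by
  rw [Matrix.det_unique]
  simp only [Matrix.add_apply, Matrix.one_apply_eq, Matrix.mul_apply, Matrix.replicateRow_apply,
    Matrix.replicateCol_apply, dotProduct, Matrix.mulVec, Finset.mul_sum]
  congr 1
  rw [Finset.sum_comm]
  refine Finset.sum_congr rfl fun l _ => ?_
  rw [Finset.sum_mul]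
  exact Finset.sum_congr rfl fun k _ => by ring

lemma det_sub_smul_vecMulVec {nn : ℕ} (A : Matrix (Fin nn) (Fin nn) ℂ) (hA : IsUnit A.det)
    (c : ℂ) (w : Fin nn → ℂ) :
    (A - c • Matrix.vecMulVec w w).det = A.det * (1 - c * (w ⬝ᵥ (A⁻¹ *ᵥ w))) := by
  have h1 : A - c • Matrix.vecMulVec w w
      = A + Matrix.replicateCol Unit ((-c) • w) * Matrix.replicateRow Unit w := by
    rw [← Matrix.vecMulVec_eq, smul_vecMulVec, neg_smul, ← sub_eq_add_neg]
  rw [h1, Matrix.det_add_replicateCol_mul_replicateRow hA, det_unit_one_add, Matrix.mulVec_smul,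
    dotProduct_smul, smul_eq_mul]
  ring_nf

lemma block_decomp (lam : ℂ) (m n : ℕ) :
    lam • (1 : Matrix (Fin m ⊕ Fin n) (Fin m ⊕ Fin n) ℂ) - Amat m n
      = Matrix.fromBlocks (Tphi lam m) (-(Matrix.vecMulVec (gvec1 m) (gvec2 n)))
        (-(Matrix.vecMulVec (gvec2 n) (gvec1 m))) (Tphi lam n) := by
  ext i j
  rcases i with i | i <;> rcases j with j | j <;>
    simp only [Matrix.sub_apply, Matrix.smul_apply, Matrix.one_apply, Amat, Tphi,
      Matrix.fromBlocks_apply₁₁, Matrix.fromBlocks_apply₁₂, Matrix.fromBlocks_apply₂₁,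
      Matrix.fromBlocks_apply₂₂, Matrix.neg_apply, Matrix.of_apply, Sum.inl.injEq,
      Sum.inr.injEq, smul_eq_mul, reduceCtorEq] <;>
    split_ifs with h <;>
    simp_all <;> ring

/-- for `λ ∈ ℂ \ [−1,1]`,
    `det(λI − A) = det T_m[φ] · det T_n[φ] ·
      (1 − ⟨T_m[φ]⁻¹𝔤₁, 𝔤₁⟩ · ⟨T_n[φ]⁻¹𝔤₂, 𝔤₂⟩)`. -/
theorem det_two_block (lam : ℂ) (hlam : lam ∉ (Complex.ofReal '' Set.Icc (-1 : ℝ) 1))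
    (m n : ℕ) :
    (lam • (1 : Matrix (Fin m ⊕ Fin n) (Fin m ⊕ Fin n) ℂ) - Amat m n).det
      = (Tphi lam m).det * (Tphi lam n).det *
        (1 - pairing ((Tphi lam m)⁻¹ *ᵥ gvec1 m) (gvec1 m) *
             pairing ((Tphi lam n)⁻¹ *ᵥ gvec2 n) (gvec2 n)) := by
  have hm := Tphi_det_isUnit lam hlam m
  have hn := Tphi_det_isUnit lam hlam n
  haveI : Invertible (Tphi lam m) := (Tphi lam m).invertibleOfIsUnitDet hm
  rw [block_decomp, Matrix.det_fromBlocks₁₁, Matrix.invOf_eq_nonsing_inv]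
  have hSchur : Tphi lam n - -(Matrix.vecMulVec (gvec2 n) (gvec1 m)) * (Tphi lam m)⁻¹ *
        -(Matrix.vecMulVec (gvec1 m) (gvec2 n))
      = Tphi lam n - (pairing ((Tphi lam m)⁻¹ *ᵥ gvec1 m) (gvec1 m)) •
          Matrix.vecMulVec (gvec2 n) (gvec2 n) := by
    rw [Matrix.neg_mul, Matrix.mul_neg, Matrix.neg_mul, neg_neg, Matrix.mul_assoc,
      mul_vecMulVec, vecMulVec_mul_vecMulVec]
    congr 2
    rw [pairing_eq_dot]
    exact (dotProduct_comm _ _)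
  rw [hSchur, det_sub_smul_vecMulVec _ hn]
  have hp2 : gvec2 n ⬝ᵥ ((Tphi lam n)⁻¹ *ᵥ gvec2 n)
      = pairing ((Tphi lam n)⁻¹ *ᵥ gvec2 n) (gvec2 n) := by
    rw [pairing_eq_dot]
    exact dotProduct_comm _ _
  rw [hp2]
  ring
end

section
/- There exist constants C > 0 and m₀ ∈ ℕ such that for all m ≥ m₀ and all real t with |t| ≤ 1 − 1/√m, |f̃_{m,1}(it)| ≤ C·e^{−√m/2}/√m. -/
noncomputable def ftilde (m : ℕ) (z : ℂ) : ℂ :=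
  (-1 : ℂ) ^ ((m - 1) / 2) * z *
    ∫ t in (0 : ℝ)..1, ((t : ℂ) * z) ^ (2 * ((m - 1) / 2) + 2) / (1 + ((t : ℂ) * z) ^ 2)

/-- `|f̃_{m,1}(it)| ≤ C·e^{−√m/2}/√m` for large `m`, uniformly in
    `|t| ≤ 1 − 1/√m`. -/
theorem ftilde_inner_bound :
    ∃ C : ℝ, 0 < C ∧ ∃ m₀ : ℕ, ∀ m : ℕ, m₀ ≤ m → ∀ t : ℝ,
      |t| ≤ 1 - 1 / Real.sqrt m →
      ‖ftilde m (Complex.I * (t : ℂ))‖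
        ≤ C * Real.exp (-Real.sqrt m / 2) / Real.sqrt m := by
  refine ⟨384, by norm_num, 1, fun m hm t ht => ?_⟩
  have hm1 : (1:ℝ) ≤ (m:ℝ) := by exact_mod_cast hm
  set x := Real.sqrt (m:ℝ) with hxdef
  have hx1 : 1 ≤ x := by
    rw [hxdef, show (1:ℝ) = Real.sqrt 1 by simp]
    exact Real.sqrt_le_sqrt hm1
  have hx0 : (0:ℝ) < x := lt_of_lt_of_le one_pos hx1
  have hinvx : 1/x ≤ 1 := by rw [div_le_one hx0]; exact hx1
  have hinvx0 : 0 < 1/x := div_pos one_pos hx0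
  have ht1 : |t| ≤ 1 := le_trans ht (by linarith)
  set n := 2 * ((m - 1) / 2) + 2 with hndef
  have hmn : m ≤ n + 1 := by omega
  -- integrand bound
  have key : ∀ s ∈ Set.uIoc (0:ℝ) 1,
      ‖((s:ℂ) * (Complex.I * (t:ℂ))) ^ n / (1 + ((s:ℂ) * (Complex.I * (t:ℂ))) ^ 2)‖
        ≤ |t| ^ n * x := by
    intro s hs
    rw [Set.uIoc_of_le (by norm_num : (0:ℝ) ≤ 1)] at hs
    obtain ⟨hs0, hs1⟩ := hs
    have hden : (1 + ((s:ℂ) * (Complex.I * (t:ℂ))) ^ 2) = ((1 - s^2 * t^2 : ℝ) : ℂ) := by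
      have : ((s:ℂ) * (Complex.I * (t:ℂ))) ^ 2 = (s:ℂ)^2 * (t:ℂ)^2 * Complex.I^2 := by ring
      rw [this, Complex.I_sq]
      push_cast
      ring
    have hst : s^2 * t^2 ≤ 1 - 1/x := by
      have hs2 : s^2 ≤ 1 := by nlinarith
      have htabs : t^2 ≤ |t| := by
        nlinarith [sq_abs t, abs_nonneg t]
      nlinarith [sq_nonneg t]
    have hdenlb : 1/x ≤ 1 - s^2 * t^2 := by linarith
    have hdenpos : (0:ℝ) < 1 - s^2 * t^2 := lt_of_lt_of_le hinvx0 hdenlb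
    have hnum : ‖((s:ℂ) * (Complex.I * (t:ℂ))) ^ n‖ ≤ |t| ^ n := by
      rw [norm_pow, norm_mul, norm_mul, Complex.norm_I, Complex.norm_real, Complex.norm_real]
      simp only [one_mul, Real.norm_eq_abs]
      have : |s| * |t| ≤ |t| := by
        rw [abs_of_nonneg hs0.le]
        nlinarith [abs_nonneg t]
      exact pow_le_pow_left₀ (by positivity) this n
    rw [norm_div, hden]
    have hdennorm : ‖((1 - s^2 * t^2 : ℝ) : ℂ)‖ = 1 - s^2*t^2 := by
      rw [Complex.norm_real, Real.norm_eq_abs, abs_of_pos hdenpos]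
    rw [hdennorm]
    calc ‖((s:ℂ) * (Complex.I * (t:ℂ))) ^ n‖ / (1 - s^2*t^2)
        ≤ |t|^n / (1/x) := by
          apply div_le_div₀ (by positivity) hnum hinvx0 hdenlb
      _ = |t|^n * x := by field_simp
  have hint : ‖∫ s in (0:ℝ)..1, ((s:ℂ) * (Complex.I * (t:ℂ))) ^ n / (1 + ((s:ℂ) * (Complex.I * (t:ℂ))) ^ 2)‖
      ≤ |t| ^ n * x := by
    have := intervalIntegral.norm_integral_le_of_norm_le_const key
    simpa using this
  have habs : ‖ftilde m (Complex.I * (t:ℂ))‖ ≤ |t| ^ (n+1) * x := by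
    have heq : ‖ftilde m (Complex.I * (t:ℂ))‖
        = |t| * ‖∫ s in (0:ℝ)..1, ((s:ℂ) * (Complex.I * (t:ℂ))) ^ n / (1 + ((s:ℂ) * (Complex.I * (t:ℂ))) ^ 2)‖ := by
      rw [ftilde]
      rw [norm_mul, norm_mul, norm_pow, norm_neg, norm_one, one_pow, one_mul,
        norm_mul, Complex.norm_I, Complex.norm_real, Real.norm_eq_abs, one_mul]
    rw [heq]
    calc |t| * ‖∫ s in (0:ℝ)..1, ((s:ℂ) * (Complex.I * (t:ℂ))) ^ n / (1 + ((s:ℂ) * (Complex.I * (t:ℂ))) ^ 2)‖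
        ≤ |t| * (|t|^n * x) := mul_le_mul_of_nonneg_left hint (abs_nonneg t)
      _ = |t|^(n+1) * x := by ring
  -- |t|^(n+1) ≤ exp(-x)
  have h1 : |t|^(n+1) ≤ |t|^m := pow_le_pow_of_le_one (abs_nonneg t) ht1 hmn
  have h2 : |t|^m ≤ (1 - 1/x)^m := pow_le_pow_left₀ (abs_nonneg t) ht m
  have h3 : (1 - 1/x)^m ≤ Real.exp (-x) := by
    have e1 : 1 - 1/x ≤ Real.exp (-(1/x)) := by
      have := Real.add_one_le_exp (-(1/x))
      linarith
    calc (1 - 1/x)^m ≤ (Real.exp (-(1/x)))^m :=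
          pow_le_pow_left₀ (by linarith) e1 m
      _ = Real.exp ((m:ℝ) * (-(1/x))) := by rw [← Real.exp_nat_mul]
      _ = Real.exp (-((m:ℝ)/x)) := by ring_nf
      _ = Real.exp (-x) := by rw [hxdef, Real.div_sqrt]
  have hbound : ‖ftilde m (Complex.I * (t:ℂ))‖ ≤ Real.exp (-x) * x := by
    calc ‖ftilde m (Complex.I * (t:ℂ))‖ ≤ |t|^(n+1) * x := habs
      _ ≤ Real.exp (-x) * x := by
          apply mul_le_mul_of_nonneg_right _ hx0.le
          exact h1.trans (h2.trans h3)
  refine hbound.trans ?_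
  -- exp(-x) * x ≤ 384 * exp(-x/2) / x
  have hq : x^2 ≤ 384 * Real.exp (x/2) := by
    have h2 : x/4 + 1 ≤ Real.exp (x/4) := Real.add_one_le_exp _
    have h3 : Real.exp (x/4) * Real.exp (x/4) = Real.exp (x/2) := by
      rw [← Real.exp_add]; ring_nf
    nlinarith [Real.exp_pos (x/4)]
  have hE : Real.exp (-x) = Real.exp (-x/2) * Real.exp (-x/2) := by
    rw [← Real.exp_add]; ring_nf
  have hI : Real.exp (-x/2) * Real.exp (x/2) = 1 := by
    rw [← Real.exp_add, show -x/2 + x/2 = 0 by ring, Real.exp_zero]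
  rw [le_div_iff₀ hx0]
  nlinarith [Real.exp_pos (-x/2), Real.exp_pos (x/2), hq, hE, hI, hx0]
end

section
/- There exist constants C > 0 and m₀ ∈ ℕ such that for all m ≥ m₀ and all real t with 1 − 1/√m ≤ t ≤ 1 − 1/m, one has |f̃_{m,1}(it) − (1/(2i)) ∫_{m(1−t)}^{∞} (e^{−ζ}/ζ) dζ| ≤ C·(ln m)/m; in particular |f̃_{m,1}(it)| ≤ C and |f̃_{m,1}(−it)| ≤ C for all such m and t. -/
open MeasureTheory

lemma ftilde_I (m : ℕ) (t : ℝ) :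
    ftilde m (Complex.I * t) =
      -Complex.I * ((∫ y in (0:ℝ)..t, y ^ (2 * ((m - 1) / 2) + 2) / (1 - y ^ 2) : ℝ) : ℂ) := by
  set M := (m - 1) / 2 with hM
  have key : ∀ s : ℝ, ((s:ℂ) * (Complex.I * t)) ^ (2*M+2) / (1 + ((s:ℂ) * (Complex.I*t))^2)
      = (-1:ℂ)^(M+1) * (((s*t) ^ (2*M+2) / (1 - (s*t)^2) : ℝ) : ℂ) := by
    intro s
    have h1 : ((s:ℂ) * (Complex.I * t)) = Complex.I * (((s*t : ℝ)):ℂ) := by push_cast; ring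
    have h2 : (Complex.I) ^ (2*M+2) = (-1:ℂ)^(M+1) := by
      have : 2*M+2 = 2*(M+1) := by ring
      rw [this, pow_mul, Complex.I_sq]
    rw [h1, mul_pow, mul_pow, h2, Complex.I_sq]
    push_cast
    ring
  unfold ftilde
  rw [intervalIntegral.integral_congr (fun s _ => key s),
    intervalIntegral.integral_const_mul, intervalIntegral.integral_ofReal]
  have sub : (t • ∫ s in (0:ℝ)..1, (s*t)^(2*M+2)/(1-(s*t)^2))
      = ∫ y in (0:ℝ)..t, y^(2*M+2)/(1-y^2) := by
    have h := intervalIntegral.smul_integral_comp_mul_right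
      (f := fun y => y^(2*M+2)/(1-y^2)) (a := 0) (b := 1) t
    simp only [zero_mul, one_mul] at h; exact h
  rw [smul_eq_mul] at sub
  rw [← hM, ← sub]
  have hpow : (-1:ℂ)^M * (-1:ℂ)^(M+1) = -1 := by
    rw [← pow_add]
    have : M + (M+1) = 2*M+1 := by ring
    rw [this, pow_succ, pow_mul]
    norm_num
  set X : ℝ := ∫ s in (0:ℝ)..1, (s*t)^(2*M+2)/(1-(s*t)^2) with hX
  push_cast
  linear_combination (Complex.I * (t:ℂ) * (X:ℂ)) * hpow

lemma ftilde_negI (m : ℕ) (t : ℝ) :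
    ftilde m (-(Complex.I * t)) =
      Complex.I * ((∫ y in (0:ℝ)..t, y ^ (2 * ((m - 1) / 2) + 2) / (1 - y ^ 2) : ℝ) : ℂ) := by
  set M := (m - 1) / 2 with hM
  have key : ∀ s : ℝ, ((s:ℂ) * (Complex.I * t)) ^ (2*M+2) / (1 + ((s:ℂ) * (Complex.I*t))^2)
      = (-1:ℂ)^(M+1) * (((s*t) ^ (2*M+2) / (1 - (s*t)^2) : ℝ) : ℂ) := by
    intro s
    have h1 : ((s:ℂ) * (Complex.I * t)) = Complex.I * (((s*t : ℝ)):ℂ) := by push_cast; ring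
    have h2 : (Complex.I) ^ (2*M+2) = (-1:ℂ)^(M+1) := by
      have : 2*M+2 = 2*(M+1) := by ring
      rw [this, pow_mul, Complex.I_sq]
    rw [h1, mul_pow, mul_pow, h2, Complex.I_sq]
    push_cast
    ring
  have key' : ∀ s : ℝ, ((s:ℂ) * -(Complex.I * t)) ^ (2*M+2) / (1 + ((s:ℂ) * -(Complex.I*t))^2)
      = (-1:ℂ)^(M+1) * (((s*t) ^ (2*M+2) / (1 - (s*t)^2) : ℝ) : ℂ) := by
    intro s
    have e : Even (2*M+2) := ⟨M+1, by ring⟩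
    have h : (s:ℂ) * -(Complex.I*↑t) = -((s:ℂ)*(Complex.I*↑t)) := by ring
    rw [h, e.neg_pow, neg_sq]
    exact key s
  unfold ftilde
  rw [intervalIntegral.integral_congr (fun s _ => key' s),
    intervalIntegral.integral_const_mul, intervalIntegral.integral_ofReal]
  have sub : (t • ∫ s in (0:ℝ)..1, (s*t)^(2*M+2)/(1-(s*t)^2))
      = ∫ y in (0:ℝ)..t, y^(2*M+2)/(1-y^2) := by
    have h := intervalIntegral.smul_integral_comp_mul_right
      (f := fun y => y^(2*M+2)/(1-y^2)) (a := 0) (b := 1) t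
    simp only [zero_mul, one_mul] at h; exact h
  rw [smul_eq_mul] at sub
  rw [← hM, ← sub]
  have hpow : (-1:ℂ)^M * (-1:ℂ)^(M+1) = -1 := by
    rw [← pow_add]
    have : M + (M+1) = 2*M+1 := by ring
    rw [this, pow_succ, pow_mul]
    norm_num
  set X : ℝ := ∫ s in (0:ℝ)..1, (s*t)^(2*M+2)/(1-(s*t)^2) with hX
  push_cast
  linear_combination (-(Complex.I * (t:ℂ) * (X:ℂ))) * hpow

lemma ve_le {v : ℝ} (hv : 0 ≤ v) : v * Real.exp (-v) ≤ 1 := by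
  have h := Real.add_one_le_exp v
  have hp : (0:ℝ) < Real.exp v := Real.exp_pos v
  rw [Real.exp_neg]
  rw [mul_inv_le_iff₀ hp, one_mul]
  linarith

lemma intExp {c t : ℝ} (hc : 0 < c) (ht0 : 0 ≤ t) (ht1 : t ≤ 1) :
    ∫ y in (0:ℝ)..t, Real.exp (-(c*(1-y))) ≤ 1/c := by
  have hd : ∀ y ∈ Set.uIcc (0:ℝ) t, HasDerivAt (fun y => Real.exp (-(c*(1-y)))/c)
      (Real.exp (-(c*(1-y)))) y := by
    intro y _
    have h1 : HasDerivAt (fun y : ℝ => -(c*(1-y))) c y := by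
      have h := (((hasDerivAt_const y (1:ℝ)).sub (hasDerivAt_id y)).const_mul c).neg
      simp at h; exact h
    have h2 := (h1.exp).div_const c
    refine h2.congr_deriv ?_
    field_simp
  have hcont : IntervalIntegrable (fun y => Real.exp (-(c*(1-y)))) volume 0 t :=
    (Real.continuous_exp.comp ((continuous_const.mul (continuous_const.sub continuous_id)).neg)).intervalIntegrable 0 t
  rw [intervalIntegral.integral_eq_sub_of_hasDerivAt hd hcont]
  have h1 : Real.exp (-(c*(1-t))) ≤ 1 := by
    apply Real.exp_le_one_iff.mpr; nlinarith
  have h2 : 0 ≤ Real.exp (-(c*(1-0)))/c := by positivity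
  have h3 : Real.exp (-(c*(1-t)))/c ≤ 1/c := by gcongr
  linarith

lemma intUExp {c t : ℝ} (hc : 0 < c) (ht1 : t ≤ 1) :
    ∫ y in (0:ℝ)..t, (1-y) * Real.exp (-(c*(1-y))) ≤ 2/c^2 := by
  have hd : ∀ y ∈ Set.uIcc (0:ℝ) t, HasDerivAt
      (fun y => ((1-y)/c + 1/c^2) * Real.exp (-(c*(1-y))))
      ((1-y) * Real.exp (-(c*(1-y)))) y := by
    intro y _
    have h1 : HasDerivAt (fun y : ℝ => -(c*(1-y))) c y := by
      have h := (((hasDerivAt_const y (1:ℝ)).sub (hasDerivAt_id y)).const_mul c).neg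
      simp at h; exact h
    have h2 : HasDerivAt (fun y : ℝ => (1-y)/c + 1/c^2) (-(1/c)) y := by
      have h := (((hasDerivAt_const y (1:ℝ)).sub (hasDerivAt_id y)).div_const c).add
        (hasDerivAt_const y (1/c^2))
      refine h.congr_deriv ?_
      ring
    have h3 := h2.mul h1.exp
    refine h3.congr_deriv ?_
    field_simp
    ring
  have hcont : IntervalIntegrable (fun y => (1-y) * Real.exp (-(c*(1-y)))) volume 0 t :=
    (((continuous_const.sub continuous_id).mul
      (Real.continuous_exp.comp ((continuous_const.mul (continuous_const.sub continuous_id)).neg)))).intervalIntegrable 0 t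
  rw [intervalIntegral.integral_eq_sub_of_hasDerivAt hd hcont]
  have e1 : Real.exp (-(c*(1-t))) ≤ 1 := Real.exp_le_one_iff.mpr (by nlinarith)
  have e2 : (0:ℝ) < Real.exp (-(c*(1-0))) := Real.exp_pos _
  have e3 : (1-t) * Real.exp (-(c*(1-t))) ≤ 1/c := by
    have := ve_le (v := c*(1-t)) (by nlinarith)
    have hrw : (1-t) * Real.exp (-(c*(1-t))) = (c*(1-t) * Real.exp (-(c*(1-t))))/c := by
      field_simp
    rw [hrw]
    calc (c*(1-t) * Real.exp (-(c*(1-t))))/c ≤ 1/c := by gcongr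
      _ = 1/c := rfl
  have e4 : ((1-t)/c + 1/c^2) * Real.exp (-(c*(1-t))) ≤ 1/c^2 + 1/c^2 := by
    have expnn : (0:ℝ) ≤ Real.exp (-(c*(1-t))) := (Real.exp_pos _).le
    have : ((1-t)/c) * Real.exp (-(c*(1-t))) ≤ 1/c^2 := by
      have : ((1-t)/c) * Real.exp (-(c*(1-t))) = ((1-t) * Real.exp (-(c*(1-t))))/c := by ring
      rw [this]
      calc ((1-t) * Real.exp (-(c*(1-t))))/c ≤ (1/c)/c := by gcongr
        _ = 1/c^2 := by field_simp
    have h2 : (1/c^2) * Real.exp (-(c*(1-t))) ≤ 1/c^2 := by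
      have : (1/c^2) * Real.exp (-(c*(1-t))) ≤ (1/c^2) * 1 := by gcongr
      linarith
    nlinarith
  have e5 : 0 ≤ ((1-0)/c + 1/c^2) * Real.exp (-(c*(1-0))) := by positivity
  have : (2:ℝ)/c^2 = 1/c^2 + 1/c^2 := by ring
  linarith

lemma pow_sub_pow_le {a b : ℝ} (hb : 0 ≤ b) (hab : b ≤ a) (n : ℕ) :
    a^(n+1) - b^(n+1) ≤ (n+1) * a^n * (a-b) := by
  induction n with
  | zero => simp
  | succ k ih =>
    have ha : 0 ≤ a := hb.trans hab
    have hbk : b^(k+1) ≤ a^(k+1) := pow_le_pow_left₀ hb hab _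
    have key : a^(k+2) - b^(k+2) = a*(a^(k+1) - b^(k+1)) + b^(k+1)*(a-b) := by ring
    rw [key]
    have h1 : a*(a^(k+1) - b^(k+1)) ≤ a*((k+1) * a^k * (a-b)) := by
      apply mul_le_mul_of_nonneg_left ih ha
    have h2 : b^(k+1)*(a-b) ≤ a^(k+1)*(a-b) := by
      apply mul_le_mul_of_nonneg_right hbk (by linarith)
    have : a*((k+1) * a^k * (a-b)) + a^(k+1)*(a-b) = (k+1+1)*a^(k+1)*(a-b) := by ring
    push_cast
    push_cast at this
    nlinarith [pow_nonneg ha k, pow_nonneg ha (k+1)]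

lemma expdiv_integrableOn {a : ℝ} (ha : 1 ≤ a) :
    IntegrableOn (fun ζ => Real.exp (-ζ)/ζ) (Set.Ioi a) := by
  have hexp : IntegrableOn (fun ζ : ℝ => Real.exp (-ζ)) (Set.Ioi a) := by
    simpa using exp_neg_integrableOn_Ioi a one_pos
  apply Integrable.mono' hexp
  · exact ((Real.measurable_exp.comp measurable_neg).div measurable_id).aestronglyMeasurable
  · rw [ae_restrict_iff' measurableSet_Ioi]
    refine ae_of_all _ (fun ζ hζ => ?_)
    have h1 : (1:ℝ) ≤ ζ := ha.trans (le_of_lt hζ)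
    have h0 : (0:ℝ) < ζ := by linarith
    rw [Real.norm_eq_abs, abs_of_nonneg (by positivity)]
    calc Real.exp (-ζ)/ζ ≤ Real.exp (-ζ)/1 := by gcongr
      _ = Real.exp (-ζ) := by ring

lemma expdiv_tail {a : ℝ} (ha : 1 ≤ a) :
    (0 ≤ ∫ ζ in Set.Ioi a, Real.exp (-ζ)/ζ) ∧
    (∫ ζ in Set.Ioi a, Real.exp (-ζ)/ζ) ≤ Real.exp (-a) := by
  constructor
  · apply setIntegral_nonneg measurableSet_Ioi
    intro ζ hζ
    have : (0:ℝ) < ζ := lt_of_lt_of_le one_pos (ha.trans (le_of_lt hζ))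
    positivity
  · rw [← integral_exp_neg_Ioi a]
    apply setIntegral_mono_on (expdiv_integrableOn ha)
      (by simpa using exp_neg_integrableOn_Ioi a one_pos) measurableSet_Ioi
    intro ζ hζ
    have h1 : (1:ℝ) ≤ ζ := ha.trans (le_of_lt hζ)
    calc Real.exp (-ζ)/ζ ≤ Real.exp (-ζ)/1 := by gcongr <;> linarith
      _ = Real.exp (-ζ) := by ring

lemma expdiv_split {x b : ℝ} (hx : 1 ≤ x) (hxb : x ≤ b) :
    (∫ ζ in Set.Ioi x, Real.exp (-ζ)/ζ) =
      (∫ ζ in x..b, Real.exp (-ζ)/ζ) + ∫ ζ in Set.Ioi b, Real.exp (-ζ)/ζ := by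
  rw [intervalIntegral.integral_of_le hxb, ← setIntegral_union (Set.Ioc_disjoint_Ioi le_rfl)
    measurableSet_Ioi ((expdiv_integrableOn hx).mono_set Set.Ioc_subset_Ioi_self)
    (expdiv_integrableOn (hx.trans hxb)), Set.Ioc_union_Ioi_eq_Ioi hxb]

lemma Q_eq {m : ℕ} (hm : 1 ≤ m) {t : ℝ} (ht0 : 0 ≤ t) (ht : t < 1) :
    ∫ y in (0:ℝ)..t, Real.exp (-((m:ℝ)*(1-y)))/(1-y)
      = ∫ ζ in ((m:ℝ)*(1-t))..(m:ℝ), Real.exp (-ζ)/ζ := by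
  have hm0 : (0:ℝ) < m := by exact_mod_cast hm
  have key : ∀ y ∈ Set.uIcc (0:ℝ) t,
      Real.exp (-((m:ℝ)*(1-y)))/(1-y) = (m:ℝ) * (Real.exp (-((m:ℝ) - (m:ℝ)*y))/((m:ℝ) - (m:ℝ)*y)) := by
    intro y hy
    rw [Set.uIcc_of_le ht0] at hy
    have h1 : y ≤ t := hy.2
    have h2 : (0:ℝ) < 1 - y := by linarith
    have h3 : (m:ℝ) - (m:ℝ)*y = (m:ℝ)*(1-y) := by ring
    rw [h3]
    field_simp
  rw [intervalIntegral.integral_congr key, intervalIntegral.integral_const_mul]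
  have := intervalIntegral.smul_integral_comp_sub_mul
    (f := fun ζ => Real.exp (-ζ)/ζ) (a := 0) (b := t) (m:ℝ) (m:ℝ)
  rw [smul_eq_mul] at this
  rw [this]
  norm_num
  congr 1
  ring

lemma pointwise_bd {m n : ℕ} (hmn : m ≤ n) (hnm : n ≤ m+1) (hm : 1 ≤ m) {y : ℝ}
    (hy0 : 0 ≤ y) (hy1 : y < 1) :
    |y^n/(1-y) - Real.exp (-((m:ℝ)*(1-y)))/(1-y)| ≤
      Real.exp (-((m:ℝ)*(1-y))) + (n:ℝ) * ((1-y) * Real.exp (-(((n:ℝ)-1)*(1-y)))) := by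
  obtain ⟨u, hu_def⟩ : ∃ u : ℝ, u = 1 - y := ⟨1 - y, rfl⟩
  rw [show (1:ℝ)-y = u from hu_def.symm]
  have hu : 0 < u := by simp [hu_def]; linarith
  have hu1 : u ≤ 1 := by simp [hu_def]; linarith
  have hn1 : 1 ≤ n := hm.trans hmn
  set a : ℝ := Real.exp (-u) with ha_def
  have ha0 : 0 < a := Real.exp_pos _
  have hba : y ≤ a := by
    have := Real.add_one_le_exp (-u)
    simp only [ha_def]; linarith
  have hab2 : a - y ≤ u^2 := by
    have h1 : 1 + u ≤ Real.exp u := by have := Real.add_one_le_exp u; linarith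
    have h2 : a ≤ 1/(1+u) := by
      rw [ha_def, Real.exp_neg, inv_eq_one_div]
      exact one_div_le_one_div_of_le (by linarith) h1
    have h3 : 1/(1+u) - (1-u) ≤ u^2 := by
      rw [div_sub' (by positivity : (1:ℝ)+u ≠ 0)]
      rw [div_le_iff₀ (by positivity : (0:ℝ) < 1+u)]
      nlinarith
    have hy_eq : y = 1 - u := by simp [hu_def]
    linarith [h3, hy_eq]
  -- y^n ≤ exp(-(n*u)) ≤ exp(-(m*u))
  have han : a^n = Real.exp (-((n:ℝ)*u)) := by
    rw [ha_def, ← Real.exp_nat_mul]; ring_nf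
  have hyn_le : y^n ≤ a^n := pow_le_pow_left₀ hy0 hba n
  have hmono : Real.exp (-((n:ℝ)*u)) ≤ Real.exp (-((m:ℝ)*u)) := by
    apply Real.exp_le_exp.mpr
    have : (m:ℝ) ≤ (n:ℝ) := by exact_mod_cast hmn
    nlinarith
  have hyn : y^n ≤ Real.exp (-((m:ℝ)*u)) := by
    calc y^n ≤ a^n := hyn_le
      _ = Real.exp (-((n:ℝ)*u)) := han
      _ ≤ _ := hmono
  -- T1 : exp(-(m u)) - exp(-(n u)) ≤ u * exp(-(m u))
  have hT1 : Real.exp (-((m:ℝ)*u)) - Real.exp (-((n:ℝ)*u)) ≤ u * Real.exp (-((m:ℝ)*u)) := by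
    have hk : (n:ℝ) - (m:ℝ) ≤ 1 := by
      have : (n:ℝ) ≤ (m:ℝ)+1 := by exact_mod_cast hnm
      linarith
    have hk0 : 0 ≤ (n:ℝ) - (m:ℝ) := by
      have : (m:ℝ) ≤ (n:ℝ) := by exact_mod_cast hmn
      linarith
    have hsplit : Real.exp (-((n:ℝ)*u)) = Real.exp (-((m:ℝ)*u)) * Real.exp (-(((n:ℝ)-(m:ℝ))*u)) := by
      rw [← Real.exp_add]; ring_nf
    have hv : 1 - Real.exp (-(((n:ℝ)-(m:ℝ))*u)) ≤ ((n:ℝ)-(m:ℝ))*u := by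
      have := Real.add_one_le_exp (-(((n:ℝ)-(m:ℝ))*u))
      linarith
    have hvu : ((n:ℝ)-(m:ℝ))*u ≤ u := by nlinarith
    have hexp_pos : 0 < Real.exp (-((m:ℝ)*u)) := Real.exp_pos _
    calc Real.exp (-((m:ℝ)*u)) - Real.exp (-((n:ℝ)*u))
        = Real.exp (-((m:ℝ)*u)) * (1 - Real.exp (-(((n:ℝ)-(m:ℝ))*u))) := by rw [hsplit]; ring
      _ ≤ Real.exp (-((m:ℝ)*u)) * u := by
          apply mul_le_mul_of_nonneg_left (hv.trans hvu) hexp_pos.le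
      _ = u * Real.exp (-((m:ℝ)*u)) := by ring
  -- T2 : exp(-(n u)) - y^n ≤ n * u^2 * exp(-((n-1) u))
  have hT2 : Real.exp (-((n:ℝ)*u)) - y^n ≤ (n:ℝ) * u^2 * Real.exp (-(((n:ℝ)-1)*u)) := by
    have hpow := pow_sub_pow_le hy0 hba (n-1)
    have hn_eq : n - 1 + 1 = n := Nat.succ_pred_eq_of_pos hn1
    rw [hn_eq] at hpow
    have hcast : ((n-1:ℕ):ℝ) = (n:ℝ) - 1 := by
      have := Nat.cast_sub hn1 (R := ℝ); simpa using this
    have hcast2 : ((n-1:ℕ)+1 : ℝ) = (n:ℝ) := by rw [hcast]; ring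
    have hanm : a^(n-1) = Real.exp (-(((n:ℝ)-1)*u)) := by
      rw [ha_def, ← Real.exp_nat_mul, hcast]; ring_nf
    rw [hcast2, hanm] at hpow
    have : (n:ℝ) * Real.exp (-(((n:ℝ)-1)*u)) * (a - y)
        ≤ (n:ℝ) * Real.exp (-(((n:ℝ)-1)*u)) * u^2 := by
      apply mul_le_mul_of_nonneg_left hab2 (by positivity)
    calc Real.exp (-((n:ℝ)*u)) - y^n = a^n - y^n := by rw [han]
      _ ≤ (n:ℝ) * Real.exp (-(((n:ℝ)-1)*u)) * (a - y) := hpow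
      _ ≤ (n:ℝ) * Real.exp (-(((n:ℝ)-1)*u)) * u^2 := this
      _ = (n:ℝ) * u^2 * Real.exp (-(((n:ℝ)-1)*u)) := by ring
  -- combine
  have hnum : Real.exp (-((m:ℝ)*u)) - y^n
      ≤ u * Real.exp (-((m:ℝ)*u)) + (n:ℝ) * u^2 * Real.exp (-(((n:ℝ)-1)*u)) := by linarith
  rw [div_sub_div_same, abs_div, abs_of_pos hu, abs_of_nonpos (by linarith), div_le_iff₀ hu]
  nlinarith [Real.exp_pos (-(((n:ℝ)-1)*u)), Real.exp_pos (-((m:ℝ)*u))]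

set_option maxHeartbeats 1000000 in
lemma real_main {m : ℕ} (hm : 16 ≤ m) {t : ℝ} (ht0 : 1/2 ≤ t) (ht1 : t ≤ 1 - 1/(m:ℝ)) :
    |(∫ y in (0:ℝ)..t, y ^ (2*((m-1)/2)+2) / (1 - y^2))
      - (1/2) * ∫ ζ in Set.Ioi ((m:ℝ)*(1-t)), Real.exp (-ζ)/ζ| ≤ 4/(m:ℝ) := by
  set n := 2*((m-1)/2)+2 with hn
  have hn1 : m ≤ n := by omega
  have hn2 : n ≤ m+1 := by omega
  have hm1 : 1 ≤ m := by omega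
  have hm0 : (0:ℝ) < m := by exact_mod_cast Nat.pos_of_ne_zero (by omega)
  have hm16 : (16:ℝ) ≤ m := by exact_mod_cast hm
  have hminv : 0 < 1/(m:ℝ) := by positivity
  have htlt : t < 1 := by linarith
  have ht01 : 0 ≤ t := by linarith
  have h1t : 1/(m:ℝ) ≤ 1 - t := by linarith
  have hnR : (16:ℝ) ≤ n := by
    have : (m:ℝ) ≤ (n:ℝ) := by exact_mod_cast hn1
    linarith
  have hmnR : (m:ℝ) ≤ (n:ℝ) := by exact_mod_cast hn1
  -- pointwise facts on the interval
  have hmem : ∀ y ∈ Set.uIcc (0:ℝ) t, 0 ≤ y ∧ y < 1 := by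
    intro y hy
    rw [Set.uIcc_of_le ht01] at hy
    exact ⟨hy.1, lt_of_le_of_lt hy.2 htlt⟩
  -- integrability
  have hIpow : IntervalIntegrable (fun y : ℝ => y^n) volume 0 t :=
    (continuous_pow n).intervalIntegrable 0 t
  have hIA : IntervalIntegrable (fun y : ℝ => y^n/(1-y^2)) volume 0 t := by
    apply ContinuousOn.intervalIntegrable
    apply ContinuousOn.div (continuous_pow n).continuousOn
      (continuous_const.sub (continuous_pow 2)).continuousOn
    intro y hy
    obtain ⟨h1, h2⟩ := hmem y hy
    intro h; simp only [Pi.sub_apply] at h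
    nlinarith
  have hIP : IntervalIntegrable (fun y : ℝ => y^n/(1-y)) volume 0 t := by
    apply ContinuousOn.intervalIntegrable
    apply ContinuousOn.div (continuous_pow n).continuousOn
      (continuous_const.sub continuous_id).continuousOn
    intro y hy
    obtain ⟨h1, h2⟩ := hmem y hy
    simp only [Pi.sub_apply, Pi.add_apply, id]
    intro h
    nlinarith
  have hIB : IntervalIntegrable (fun y : ℝ => y^n/(1+y)) volume 0 t := by
    apply ContinuousOn.intervalIntegrable
    apply ContinuousOn.div (continuous_pow n).continuousOn
      (continuous_const.add continuous_id).continuousOn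
    intro y hy
    obtain ⟨h1, h2⟩ := hmem y hy
    simp only [Pi.sub_apply, Pi.add_apply, id]
    intro h
    nlinarith
  have hIQ : IntervalIntegrable (fun y : ℝ => Real.exp (-((m:ℝ)*(1-y)))/(1-y)) volume 0 t := by
    apply ContinuousOn.intervalIntegrable
    apply ContinuousOn.div
      (Real.continuous_exp.comp ((continuous_const.mul (continuous_const.sub continuous_id)).neg)).continuousOn
      (continuous_const.sub continuous_id).continuousOn
    intro y hy
    obtain ⟨h1, h2⟩ := hmem y hy
    simp only [Pi.sub_apply, Pi.add_apply, id]
    intro h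
    nlinarith
  have hIE1 : IntervalIntegrable (fun y : ℝ => Real.exp (-((m:ℝ)*(1-y)))) volume 0 t :=
    (Real.continuous_exp.comp ((continuous_const.mul (continuous_const.sub continuous_id)).neg)).intervalIntegrable 0 t
  have hIE2 : IntervalIntegrable (fun y : ℝ => (1-y) * Real.exp (-(((n:ℝ)-1)*(1-y)))) volume 0 t :=
    ((continuous_const.sub continuous_id).mul
      (Real.continuous_exp.comp ((continuous_const.mul (continuous_const.sub continuous_id)).neg))).intervalIntegrable 0 t
  -- splitting A
  have hAsplit : (∫ y in (0:ℝ)..t, y^n/(1-y^2))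
      = (∫ y in (0:ℝ)..t, y^n/(1-y))/2 + (∫ y in (0:ℝ)..t, y^n/(1+y))/2 := by
    have key : ∀ y ∈ Set.uIcc (0:ℝ) t, y^n/(1-y^2) = y^n/(1-y)/2 + y^n/(1+y)/2 := by
      intro y hy
      obtain ⟨h1, h2⟩ := hmem y hy
      have d1 : (1:ℝ) - y ≠ 0 := by intro h; nlinarith
      have d2 : (1:ℝ) + y ≠ 0 := by intro h; nlinarith
      have d3 : (1:ℝ) - y^2 ≠ 0 := by intro h; nlinarith
      field_simp
      ring
    rw [intervalIntegral.integral_congr key,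
      intervalIntegral.integral_add (hIP.div_const 2) (hIB.div_const 2),
      intervalIntegral.integral_div, intervalIntegral.integral_div]
  -- B bounds
  have hB0 : 0 ≤ ∫ y in (0:ℝ)..t, y^n/(1+y) := by
    apply intervalIntegral.integral_nonneg ht01
    intro y hy
    have h1 : 0 ≤ y := hy.1
    positivity
  have hBle : (∫ y in (0:ℝ)..t, y^n/(1+y)) ≤ 1/(m:ℝ) := by
    have h1 : (∫ y in (0:ℝ)..t, y^n/(1+y)) ≤ ∫ y in (0:ℝ)..t, y^n := by
      apply intervalIntegral.integral_mono_on ht01 hIB hIpow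
      intro y hy
      have h1 : 0 ≤ y := hy.1
      calc y^n/(1+y) ≤ y^n/1 := by gcongr <;> linarith [pow_nonneg h1 n]
        _ = y^n := by ring
    have h2 : (∫ y in (0:ℝ)..t, y^n) = (t^(n+1) - 0^(n+1))/(n+1) := by
      rw [integral_pow]
    have h3 : t^(n+1) ≤ 1 := pow_le_one₀ ht01 htlt.le
    have h4 : (0:ℝ)^(n+1) = 0 := zero_pow (Nat.succ_ne_zero n)
    have h5 : (m:ℝ) ≤ (n:ℝ)+1 := by linarith
    have h6 : (t^(n+1) - (0:ℝ)^(n+1))/((n:ℝ)+1) ≤ 1/(m:ℝ) := by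
      apply div_le_div₀ (by norm_num) (by rw [h4]; linarith) hm0 h5
    calc (∫ y in (0:ℝ)..t, y^n/(1+y)) ≤ ∫ y in (0:ℝ)..t, y^n := h1
      _ = (t^(n+1) - (0:ℝ)^(n+1))/((n:ℝ)+1) := h2
      _ ≤ 1/(m:ℝ) := h6
  -- P - Q bound
  have hPQ : |(∫ y in (0:ℝ)..t, y^n/(1-y))
      - ∫ y in (0:ℝ)..t, Real.exp (-((m:ℝ)*(1-y)))/(1-y)| ≤ 5/(m:ℝ) := by
    rw [← intervalIntegral.integral_sub hIP hIQ]
    have habs := intervalIntegral.abs_integral_le_integral_abs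
      (f := fun y => y^n/(1-y) - Real.exp (-((m:ℝ)*(1-y)))/(1-y)) (μ := volume) ht01
    apply habs.trans
    have hmono : (∫ y in (0:ℝ)..t, |y^n/(1-y) - Real.exp (-((m:ℝ)*(1-y)))/(1-y)|)
        ≤ ∫ y in (0:ℝ)..t, (Real.exp (-((m:ℝ)*(1-y)))
            + (n:ℝ) * ((1-y) * Real.exp (-(((n:ℝ)-1)*(1-y))))) := by
      apply intervalIntegral.integral_mono_on ht01 (hIP.sub hIQ).abs
        (hIE1.add (hIE2.const_mul (n:ℝ)))
      intro y hy
      have h1 : 0 ≤ y := hy.1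
      have h2 : y < 1 := lt_of_le_of_lt hy.2 htlt
      exact pointwise_bd hn1 hn2 hm1 h1 h2
    apply hmono.trans
    rw [intervalIntegral.integral_add hIE1 (hIE2.const_mul (n:ℝ)),
      intervalIntegral.integral_const_mul]
    have i1 : (∫ y in (0:ℝ)..t, Real.exp (-((m:ℝ)*(1-y)))) ≤ 1/(m:ℝ) :=
      intExp hm0 ht01 htlt.le
    have i2 : (∫ y in (0:ℝ)..t, (1-y) * Real.exp (-(((n:ℝ)-1)*(1-y)))) ≤ 2/((n:ℝ)-1)^2 :=
      intUExp (by linarith) htlt.le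
    have i3 : (n:ℝ) * (∫ y in (0:ℝ)..t, (1-y) * Real.exp (-(((n:ℝ)-1)*(1-y))))
        ≤ (n:ℝ) * (2/((n:ℝ)-1)^2) :=
      mul_le_mul_of_nonneg_left i2 (by linarith)
    have i4 : (n:ℝ) * (2/((n:ℝ)-1)^2) ≤ 4/(m:ℝ) := by
      have hrw : (n:ℝ) * (2/((n:ℝ)-1)^2) = 2*(n:ℝ)/((n:ℝ)-1)^2 := by ring
      rw [hrw, div_le_div_iff₀ (by nlinarith) hm0]
      nlinarith
    have : (5:ℝ)/(m:ℝ) = 1/(m:ℝ) + 4/(m:ℝ) := by ring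
    linarith
  -- E split
  have hxm1 : 1 ≤ (m:ℝ)*(1-t) := by
    have := mul_le_mul_of_nonneg_left h1t hm0.le
    have h : (m:ℝ)*(1/(m:ℝ)) = 1 := by field_simp
    linarith
  have hxm : (m:ℝ)*(1-t) ≤ (m:ℝ) := by nlinarith
  have hEsplit := expdiv_split hxm1 hxm
  have hQeq := Q_eq hm1 ht01 htlt
  have hmR1 : (1:ℝ) ≤ (m:ℝ) := by linarith
  have hR0 := (expdiv_tail hmR1).1
  have hRle : (∫ ζ in Set.Ioi ((m:ℝ)), Real.exp (-ζ)/ζ) ≤ 1/(m:ℝ) := by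
    have h1 := (expdiv_tail hmR1).2
    have h2 : Real.exp (-(m:ℝ)) ≤ 1/(m:ℝ) := by
      rw [le_div_iff₀ hm0]
      have := ve_le hm0.le
      linarith [ve_le hm0.le]
    linarith
  -- assemble
  rw [hAsplit, hEsplit, ← hQeq]
  obtain ⟨l, r⟩ := abs_le.mp hPQ
  have e5 : (5:ℝ)/(m:ℝ) = 5*(1/(m:ℝ)) := by ring
  have e4 : (4:ℝ)/(m:ℝ) = 4*(1/(m:ℝ)) := by ring
  rw [e5] at l r
  rw [abs_le, e4]
  constructor <;> linarith [hB0, hBle, hR0, hRle, hminv.le]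


set_option maxHeartbeats 1000000 in
/-- for large `m`, uniformly in `1 − 1/√m ≤ t ≤ 1 − 1/m`,
    `f̃_{m,1}(it) = (1/(2i)) ∫_{m(1−t)}^∞ (e^{−ζ}/ζ) dζ + O((ln m)/m)`; in
    particular `f̃_{m,1}(±it)` is bounded there. -/
theorem ftilde_intermediate_bound :
    ∃ C : ℝ, 0 < C ∧ ∃ m₀ : ℕ, ∀ m : ℕ, m₀ ≤ m → ∀ t : ℝ,
      1 - 1 / Real.sqrt m ≤ t → t ≤ 1 - 1 / m →
      (‖ftilde m (Complex.I * (t : ℂ))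
          - (1 / (2 * Complex.I)) *
            ((∫ ζ in Set.Ioi ((m : ℝ) * (1 - t)), Real.exp (-ζ) / ζ : ℝ) : ℂ)‖
        ≤ C * Real.log m / m) ∧
      ‖ftilde m (Complex.I * (t : ℂ))‖ ≤ C ∧
      ‖ftilde m (-(Complex.I * (t : ℂ)))‖ ≤ C := by
  refine ⟨4, by norm_num, 16, fun m hm t htl htu => ?_⟩
  have hm0 : (0:ℝ) < m := by exact_mod_cast Nat.pos_of_ne_zero (by omega)
  have hm16 : (16:ℝ) ≤ m := by exact_mod_cast hm
  have hsqrt : (2:ℝ) ≤ Real.sqrt m := by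
    have h4 : Real.sqrt 4 = 2 := by
      rw [show (4:ℝ) = 2^2 by norm_num, Real.sqrt_sq (by norm_num)]
    rw [← h4]
    exact Real.sqrt_le_sqrt (by linarith)
  have ht0 : 1/2 ≤ t := by
    have h1 : 1/Real.sqrt m ≤ 1/2 := one_div_le_one_div_of_le (by norm_num) hsqrt
    linarith
  have ht1 : t ≤ 1 - 1/(m:ℝ) := htu
  have htlt : t < 1 := by
    have : 0 < 1/(m:ℝ) := by positivity
    linarith
  set A : ℝ := ∫ y in (0:ℝ)..t, y ^ (2*((m-1)/2)+2) / (1 - y^2) with hA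
  set E : ℝ := ∫ ζ in Set.Ioi ((m:ℝ)*(1-t)), Real.exp (-ζ)/ζ with hE
  have hmain : |A - (1/2)*E| ≤ 4/(m:ℝ) := real_main hm ht0 ht1
  -- bound on E
  have hxm1 : 1 ≤ (m:ℝ)*(1-t) := by
    have h1t : 1/(m:ℝ) ≤ 1 - t := by linarith
    have := mul_le_mul_of_nonneg_left h1t hm0.le
    have h : (m:ℝ)*(1/(m:ℝ)) = 1 := by field_simp
    linarith
  have hE0 : 0 ≤ E := (expdiv_tail hxm1).1
  have hE1 : E ≤ 1 := by
    have h1 := (expdiv_tail hxm1).2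
    have h2 : Real.exp (-((m:ℝ)*(1-t))) ≤ 1 := Real.exp_le_one_iff.mpr (by linarith)
    linarith
  have hAbd : |A| ≤ 1 := by
    have h1 : |A| ≤ |A - (1/2)*E| + |(1/2)*E| := by
      have := abs_add_le (A - (1/2)*E) ((1/2)*E)
      simpa using this
    have h2 : |(1/2)*E| = (1/2)*E := abs_of_nonneg (by linarith)
    have h3 : (4:ℝ)/(m:ℝ) ≤ 4/16 := by
      apply div_le_div₀ (by norm_num) (le_refl 4) (by norm_num) hm16
    linarith
  have h2I : (1:ℂ)/(2*Complex.I) = -Complex.I/2 := by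
    rw [div_eq_iff (by simp [Complex.I_ne_zero] : (2:ℂ)*Complex.I ≠ 0)]
    linear_combination Complex.I_sq
  refine ⟨?_, ?_, ?_⟩
  · have hval : ftilde m (Complex.I * (t:ℂ)) - (1/(2*Complex.I))*((E:ℝ):ℂ)
        = -Complex.I * (((A - (1/2)*E : ℝ)):ℂ) := by
      rw [ftilde_I, h2I]
      push_cast
      ring
    rw [hval]
    have habs : ‖-Complex.I * (((A - (1/2)*E : ℝ)):ℂ)‖ = |A - (1/2)*E| := by
      rw [norm_mul, Complex.norm_real, Real.norm_eq_abs]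
      simp
    rw [habs]
    have hlog : (1:ℝ) ≤ Real.log m := by
      rw [Real.le_log_iff_exp_le hm0]
      calc Real.exp 1 ≤ 2.7182818286 := Real.exp_one_lt_d9.le
        _ ≤ 16 := by norm_num
        _ ≤ (m:ℝ) := hm16
    calc |A - (1/2)*E| ≤ 4/(m:ℝ) := hmain
      _ ≤ 4 * Real.log m / m := by
          apply div_le_div₀ (by positivity) (by linarith) hm0 (le_refl _)
  · rw [ftilde_I]
    have habs : ‖-Complex.I * ((A:ℝ):ℂ)‖ = |A| := by
      rw [norm_mul, Complex.norm_real, Real.norm_eq_abs]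
      simp
    rw [habs]
    linarith
  · rw [ftilde_negI]
    have habs : ‖Complex.I * ((A:ℝ):ℂ)‖ = |A| := by
      rw [norm_mul, Complex.norm_real, Real.norm_eq_abs]
      simp
    rw [habs]
    linarith
end

section
/- One has (−1/π) ∫_{−1}^{1} [((1+λ)/2)·ln((1+λ)/2) + ((1−λ)/2)·ln((1−λ)/2)] / √(1−λ²) dλ = 2 ln 2 − 1. -/
open MeasureTheory

open Real Set intervalIntegral


lemma integrableOn_neg_log_Ioc : IntegrableOn (fun x : ℝ => -Real.log x) (Ioc 0 1) := by
  have hcont : ContinuousOn (fun x : ℝ => x - x * Real.log x) (Icc 0 1) :=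
    (continuous_id.sub Real.continuous_mul_log).continuousOn
  have hderiv : ∀ x ∈ Ioo (0:ℝ) 1, HasDerivAt (fun x : ℝ => x - x * Real.log x) (-Real.log x) x := by
    intro x hx
    have h1 : HasDerivAt (fun x : ℝ => x * Real.log x) (Real.log x + 1) x := by
      have := (hasDerivAt_id' (x := x)).mul (Real.hasDerivAt_log hx.1.ne')
      exact this.congr_deriv (by rw [mul_inv_cancel₀ hx.1.ne']; ring)
    have := (hasDerivAt_id' (x := x)).sub h1
    exact this.congr_deriv (by ring)
  exact integrableOn_deriv_of_nonneg hcont hderiv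
    (fun x hx => by simpa using (Real.log_nonpos hx.1.le hx.2.le))

lemma half_le_sin {x : ℝ} (h0 : 0 < x) (h1 : x ≤ Real.pi / 2) : x / 2 ≤ Real.sin x := by
  rcases le_or_gt x 1 with hx | hx
  · have := Real.sin_gt_sub_cube h0
    nlinarith [pow_le_pow_left₀ h0.le hx 3, sq_nonneg x]
  · have hs : Real.sin 1 ≤ Real.sin x := by
      apply Real.sin_le_sin_of_le_of_le_pi_div_two (by nlinarith [Real.pi_gt_three]) h1 hx.le
    have hc : 1 - (Real.pi/2 - 1) ^ 2 / 2 ≤ Real.cos (Real.pi/2 - 1) :=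
      Real.one_sub_sq_div_two_le_cos
    rw [Real.cos_pi_div_two_sub] at hc
    nlinarith [Real.pi_gt_three, Real.pi_lt_d2]

lemma intervalIntegrable_log_sin' : IntervalIntegrable (fun x => Real.log (Real.sin x)) volume 0 (Real.pi/2) := by
  have h1 : IntervalIntegrable (fun x => Real.log (Real.sin x)) volume 0 1 := by
    rw [intervalIntegrable_iff_integrableOn_Ioc_of_le (by norm_num)]
    have hmeas : AEStronglyMeasurable (fun x => Real.log (Real.sin x)) (volume.restrict (Ioc (0:ℝ) 1)) :=
      (Real.measurable_log.comp Real.measurable_sin).aestronglyMeasurable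
    have hmaj : IntegrableOn (fun x : ℝ => Real.log 2 - Real.log x) (Ioc 0 1) :=
      (integrable_const (Real.log 2)).add integrableOn_neg_log_Ioc
    refine hmaj.mono' hmeas ?_
    rw [ae_restrict_iff' measurableSet_Ioc]
    filter_upwards with x hx
    have h2 : x ≤ Real.pi / 2 := le_trans hx.2 (by nlinarith [Real.pi_gt_three])
    have hsin : x / 2 ≤ Real.sin x := half_le_sin hx.1 h2
    have hsinpos : 0 < Real.sin x := lt_of_lt_of_le (by linarith [hx.1]) hsin
    have hlog1 : Real.log (Real.sin x) ≤ 0 := Real.log_nonpos hsinpos.le (Real.sin_le_one x)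
    have hlog2 : Real.log (x/2) ≤ Real.log (Real.sin x) := Real.log_le_log (by linarith [hx.1]) hsin
    rw [Real.log_div (by linarith [hx.1] : x ≠ 0) (by norm_num : (2:ℝ) ≠ 0)] at hlog2
    rw [Real.norm_eq_abs, abs_of_nonpos hlog1]
    linarith
  have h2 : IntervalIntegrable (fun x => Real.log (Real.sin x)) volume 1 (Real.pi/2) := by
    apply ContinuousOn.intervalIntegrable
    apply ContinuousOn.log (Real.continuous_sin.continuousOn)
    intro x hx
    rw [uIcc_of_le (by nlinarith [Real.pi_gt_three])] at hx
    have : 0 < Real.sin x := Real.sin_pos_of_pos_of_lt_pi (by linarith [hx.1])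
      (by nlinarith [hx.2, Real.pi_gt_three])
    exact this.ne'
  exact h1.trans h2

lemma intervalIntegrable_log_cos' : IntervalIntegrable (fun x => Real.log (Real.cos x)) volume 0 (Real.pi/2) := by
  have := intervalIntegrable_log_sin'.comp_sub_left (Real.pi/2)
  simp only [Real.sin_pi_div_two_sub, sub_zero, sub_self] at this
  exact this.symm

lemma integral_log_cos_eq : ∫ x in (0:ℝ)..(Real.pi/2), Real.log (Real.cos x)
    = ∫ x in (0:ℝ)..(Real.pi/2), Real.log (Real.sin x) := by
  have := intervalIntegral.integral_comp_sub_left (a := (0:ℝ)) (b := Real.pi/2)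
    (fun x => Real.log (Real.sin x)) (Real.pi/2)
  simp only [Real.sin_pi_div_two_sub, sub_zero, sub_self] at this
  rw [← this, intervalIntegral.integral_symm]

lemma integral_log_sin_pi_div_two : ∫ x in (0:ℝ)..(Real.pi/2), Real.log (Real.sin x)
    = -(Real.pi/2) * Real.log 2 := by
  set J := ∫ x in (0:ℝ)..(Real.pi/2), Real.log (Real.sin x) with hJ
  have hint2 : IntervalIntegrable (fun x => Real.log (Real.sin x)) volume (Real.pi/2) Real.pi := by
    have := intervalIntegrable_log_sin'.comp_sub_left Real.pi
    simp only [Real.sin_pi_sub, sub_zero] at this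
    rw [show Real.pi - Real.pi/2 = Real.pi/2 by ring] at this
    exact this.symm
  have hfull : IntervalIntegrable (fun x => Real.log (Real.sin x)) volume 0 Real.pi :=
    intervalIntegrable_log_sin'.trans hint2
  -- ∫_{π/2}^π log sin = J
  have hhalf : ∫ x in (Real.pi/2)..Real.pi, Real.log (Real.sin x) = J := by
    have := intervalIntegral.integral_comp_sub_left (a := (0:ℝ)) (b := Real.pi/2)
      (fun x => Real.log (Real.sin x)) Real.pi
    simp only [Real.sin_pi_sub, sub_zero] at this
    rw [show Real.pi - Real.pi/2 = Real.pi/2 by ring] at this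
    rw [← this, hJ]
  -- ∫_0^{π/2} log sin 2x = J
  have hdouble : ∫ x in (0:ℝ)..(Real.pi/2), Real.log (Real.sin (2*x)) = J := by
    rw [intervalIntegral.integral_comp_mul_left (fun x => Real.log (Real.sin x)) (two_ne_zero)]
    rw [mul_zero, show (2:ℝ) * (Real.pi/2) = Real.pi by ring,
      ← intervalIntegral.integral_add_adjacent_intervals
        (b := Real.pi/2) intervalIntegrable_log_sin' hint2, hhalf, ← hJ]
    simp [smul_eq_mul]; ring
  have hsum : (∫ x in (0:ℝ)..(Real.pi/2), (Real.log (Real.sin x) + Real.log (Real.cos x)))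
      = 2 * J := by
    rw [intervalIntegral.integral_add intervalIntegrable_log_sin' intervalIntegrable_log_cos',
      integral_log_cos_eq, ← hJ]; ring
  have hprod : (∫ x in (0:ℝ)..(Real.pi/2), (Real.log (Real.sin x) + Real.log (Real.cos x)))
      = (∫ x in (0:ℝ)..(Real.pi/2), (Real.log (Real.sin (2*x)) - Real.log 2)) := by
    apply intervalIntegral.integral_congr_ae
    have hne : ∀ᵐ x : ℝ ∂volume, x ≠ Real.pi/2 := by
      refine ae_iff.mpr ?_
      simpa using measure_singleton (α := ℝ) (Real.pi/2)
    filter_upwards [hne] with x hx hmem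
    rw [Set.uIoc_of_le (by positivity : (0:ℝ) ≤ Real.pi/2)] at hmem
    have h0 : 0 < x := hmem.1
    have hlt : x < Real.pi/2 := lt_of_le_of_ne hmem.2 hx
    have hs : 0 < Real.sin x := Real.sin_pos_of_pos_of_lt_pi h0 (by nlinarith [Real.pi_gt_three])
    have hc : 0 < Real.cos x := Real.cos_pos_of_mem_Ioo ⟨by linarith [Real.pi_gt_three], hlt⟩
    rw [← Real.log_mul hs.ne' hc.ne', Real.sin_two_mul, ← Real.log_div (by positivity) two_ne_zero]
    ring_nf
  have hrhs : (∫ x in (0:ℝ)..(Real.pi/2), (Real.log (Real.sin (2*x)) - Real.log 2)) =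
      J - (Real.pi/2) * Real.log 2 := by
    rw [intervalIntegral.integral_sub (by
        have := hfull.comp_mul_left (c := 2)
        norm_num at this
        exact this) intervalIntegrable_const, hdouble]
    simp
  have : 2 * J = J - (Real.pi/2) * Real.log 2 := by rw [← hsum, hprod, hrhs]
  linarith

lemma intervalIntegrable_mul_log_sin (c : ℝ → ℝ) (hc : Measurable c) (hc1 : ∀ x, |c x| ≤ 1) :
    IntervalIntegrable (fun x => c x * Real.log (Real.sin x)) volume 0 (Real.pi/2) := by
  apply IntervalIntegrable.mono_fun (intervalIntegrable_log_sin')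
  · exact ((hc.mul (Real.measurable_log.comp Real.measurable_sin))).aestronglyMeasurable
  · filter_upwards with x
    simp only [Real.norm_eq_abs, abs_mul]
    exact mul_le_of_le_one_left (abs_nonneg _) (hc1 x)

lemma integral_cos_two_mul_log_sin :
    ∫ x in (0:ℝ)..(Real.pi/2), Real.cos (2*x) * Real.log (Real.sin x) = -(Real.pi/4) := by
  have hint : IntervalIntegrable (fun x => Real.cos (2*x) * Real.log (Real.sin x))
      volume 0 (Real.pi/2) :=
    intervalIntegrable_mul_log_sin _ (by fun_prop) (fun x => Real.abs_cos_le_one _)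
  -- antiderivative G
  set G : ℝ → ℝ := fun x => Real.cos x * (Real.sin x * Real.log (Real.sin x))
      - x/2 - Real.sin (2*x)/4 with hG
  have hderiv : ∀ x ∈ Set.Ioo (0:ℝ) (Real.pi/2),
      HasDerivAt G (Real.cos (2*x) * Real.log (Real.sin x)) x := by
    intro x hx
    have hs : 0 < Real.sin x := Real.sin_pos_of_pos_of_lt_pi hx.1
      (by nlinarith [hx.2, Real.pi_gt_three])
    have h1 : HasDerivAt (fun x => Real.sin x * Real.log (Real.sin x))
        (Real.cos x * Real.log (Real.sin x) + Real.cos x) x := by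
      have := (Real.hasDerivAt_sin x).mul ((Real.hasDerivAt_log hs.ne').comp x (Real.hasDerivAt_sin x))
      refine this.congr_deriv (Eq.symm ?_)
      field_simp
      rfl
    have h2 : HasDerivAt (fun x => Real.cos x * (Real.sin x * Real.log (Real.sin x)))
        (-Real.sin x * (Real.sin x * Real.log (Real.sin x))
          + Real.cos x * (Real.cos x * Real.log (Real.sin x) + Real.cos x)) x :=
      (Real.hasDerivAt_cos x).mul h1
    have h3 : HasDerivAt (fun x : ℝ => x/2) (1/2 : ℝ) x := by
      simpa using (hasDerivAt_id x).div_const 2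
    have h4 : HasDerivAt (fun x : ℝ => Real.sin (2*x)/4) (Real.cos (2*x) * 2 / 4) x := by
      have : HasDerivAt (fun x : ℝ => Real.sin (2*x)) (Real.cos (2*x) * 2) x := by
        simpa [Function.comp_def] using (Real.hasDerivAt_sin (2*x)).comp x ((hasDerivAt_id x).const_mul 2)
      simpa using this.div_const 4
    have := (h2.sub h3).sub h4
    refine this.congr_deriv (Eq.symm ?_)
    have hc2 : Real.cos (2*x) = Real.cos x ^ 2 - Real.sin x ^ 2 := Real.cos_two_mul' x
    rw [hc2]; linear_combination (-1/2 : ℝ) * Real.sin_sq_add_cos_sq x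
  have ha : Filter.Tendsto G (nhdsWithin 0 (Set.Ioi 0)) (nhds 0) := by
    have : Filter.Tendsto G (nhds 0) (nhds (G 0)) := by
      apply Continuous.tendsto
      have : Continuous fun x : ℝ => Real.sin x * Real.log (Real.sin x) :=
        Real.continuous_mul_log.comp Real.continuous_sin
      fun_prop
    have hG0 : G 0 = 0 := by simp [hG]
    rw [hG0] at this
    exact this.mono_left nhdsWithin_le_nhds
  have hb : Filter.Tendsto G (nhdsWithin (Real.pi/2) (Set.Iio (Real.pi/2)))
      (nhds (-(Real.pi/4))) := by
    have : Filter.Tendsto G (nhds (Real.pi/2)) (nhds (G (Real.pi/2))) := by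
      apply Continuous.tendsto
      have : Continuous fun x : ℝ => Real.sin x * Real.log (Real.sin x) :=
        Real.continuous_mul_log.comp Real.continuous_sin
      fun_prop
    have hG0 : G (Real.pi/2) = -(Real.pi/4) := by
      simp [hG, show (2:ℝ) * (Real.pi/2) = Real.pi by ring]
      ring
    rw [hG0] at this
    exact this.mono_left nhdsWithin_le_nhds
  have := intervalIntegral.integral_eq_sub_of_hasDerivAt_of_tendsto
    (by positivity : (0:ℝ) < Real.pi/2) hderiv hint ha hb
  rw [this]; ring

lemma intervalIntegrable_sin_sq_log_sin :
    IntervalIntegrable (fun x => Real.sin x ^ 2 * Real.log (Real.sin x)) volume 0 (Real.pi/2) :=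
  intervalIntegrable_mul_log_sin _ (by fun_prop)
    (fun x => by rw [abs_of_nonneg (sq_nonneg _)]; nlinarith [Real.neg_one_le_sin x, Real.sin_le_one x])

lemma integral_sin_sq_log_sin :
    ∫ x in (0:ℝ)..(Real.pi/2), Real.sin x ^ 2 * Real.log (Real.sin x)
      = Real.pi/8 - Real.pi/4 * Real.log 2 := by
  have heq : ∀ x : ℝ, Real.sin x ^ 2 * Real.log (Real.sin x)
      = (1/2) * Real.log (Real.sin x) - (1/2) * (Real.cos (2*x) * Real.log (Real.sin x)) := by
    intro x
    linear_combination Real.log (Real.sin x) * Real.sin_sq x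
      + (1/2 * Real.log (Real.sin x)) * Real.cos_two_mul x
  rw [intervalIntegral.integral_congr (fun x _ => heq x)]
  rw [intervalIntegral.integral_sub
    (intervalIntegrable_log_sin'.const_mul _)
    ((intervalIntegrable_mul_log_sin _ (by fun_prop) (fun x => Real.abs_cos_le_one _)).const_mul _),
    intervalIntegral.integral_const_mul, intervalIntegral.integral_const_mul,
    integral_log_sin_pi_div_two, integral_cos_two_mul_log_sin]
  ring

lemma intervalIntegrable_cos_sq_log_cos :
    IntervalIntegrable (fun x => Real.cos x ^ 2 * Real.log (Real.cos x)) volume 0 (Real.pi/2) := by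
  apply IntervalIntegrable.mono_fun intervalIntegrable_log_cos'
  · exact ((Real.measurable_cos.pow_const 2).mul
      (Real.measurable_log.comp Real.measurable_cos)).aestronglyMeasurable
  · filter_upwards with x
    simp only [Real.norm_eq_abs, abs_mul]
    apply mul_le_of_le_one_left (abs_nonneg _)
    rw [abs_of_nonneg (sq_nonneg _)]
    nlinarith [Real.neg_one_le_cos x, Real.cos_le_one x]

lemma integral_cos_sq_log_cos :
    ∫ x in (0:ℝ)..(Real.pi/2), Real.cos x ^ 2 * Real.log (Real.cos x)
      = Real.pi/8 - Real.pi/4 * Real.log 2 := by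
  have := intervalIntegral.integral_comp_sub_left (a := (0:ℝ)) (b := Real.pi/2)
    (fun x => Real.sin x ^ 2 * Real.log (Real.sin x)) (Real.pi/2)
  simp only [Real.sin_pi_div_two_sub, sub_zero, sub_self] at this
  rw [← integral_sin_sq_log_sin, ← this, intervalIntegral.integral_symm]

noncomputable def entH : ℝ → ℝ := fun θ =>
  ((1 + Real.cos θ)/2) * Real.log ((1 + Real.cos θ)/2)
    + ((1 - Real.cos θ)/2) * Real.log ((1 - Real.cos θ)/2)

lemma entH_two_mul (x : ℝ) : entH (2*x)
    = 2 * (Real.cos x ^ 2 * Real.log (Real.cos x)) + 2 * (Real.sin x ^ 2 * Real.log (Real.sin x)) := by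
  have h1 : (1 + Real.cos (2*x))/2 = Real.cos x ^ 2 := by
    rw [Real.cos_two_mul]; ring
  have h2 : (1 - Real.cos (2*x))/2 = Real.sin x ^ 2 := by
    rw [Real.cos_two_mul]
    linear_combination -Real.sin_sq_add_cos_sq x
  unfold entH
  rw [h1, h2, Real.log_pow, Real.log_pow]
  push_cast
  ring

lemma integral_entH : ∫ θ in (0:ℝ)..Real.pi, entH θ = Real.pi - 2 * Real.pi * Real.log 2 := by
  have hcomp := intervalIntegral.integral_comp_mul_left (a := (0:ℝ)) (b := Real.pi/2) entH two_ne_zero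
  rw [mul_zero, show (2:ℝ) * (Real.pi/2) = Real.pi by ring] at hcomp
  have : ∫ x in (0:ℝ)..(Real.pi/2), entH (2*x)
      = Real.pi/2 - Real.pi * Real.log 2 := by
    rw [intervalIntegral.integral_congr (fun x _ => entH_two_mul x),
      intervalIntegral.integral_add (intervalIntegrable_cos_sq_log_cos.const_mul 2)
        (intervalIntegrable_sin_sq_log_sin.const_mul 2),
      intervalIntegral.integral_const_mul, intervalIntegral.integral_const_mul,
      integral_cos_sq_log_cos, integral_sin_sq_log_sin]
    ring
  rw [this] at hcomp
  have := hcomp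
  rw [smul_eq_mul] at this
  linarith

lemma arccos_image : Real.arccos '' Set.Ioo (-1 : ℝ) 1 = Set.Ioo 0 Real.pi := by
  apply Set.Subset.antisymm
  · rintro θ ⟨lam, hlam, rfl⟩
    constructor
    · exact Real.arccos_pos.mpr hlam.2
    · rcases lt_or_eq_of_le (Real.arccos_le_pi lam) with h | h
      · exact h
      · exact absurd (Real.arccos_eq_pi.mp h) (by linarith [hlam.1])
  · rintro θ hθ
    refine ⟨Real.cos θ, ⟨?_, ?_⟩, Real.arccos_cos hθ.1.le hθ.2.le⟩
    · rcases lt_or_eq_of_le (Real.neg_one_le_cos θ) with h | h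
      · exact h
      · exfalso
        have : θ = Real.pi := Real.injOn_cos ⟨hθ.1.le, hθ.2.le⟩
          ⟨le_refl 0 |>.trans Real.pi_pos.le, le_refl Real.pi⟩ (by rw [Real.cos_pi, ← h])
        exact hθ.2.ne this
    · rcases lt_or_eq_of_le (Real.cos_le_one θ) with h | h
      · exact h
      · exfalso
        have : θ = 0 := Real.injOn_cos ⟨hθ.1.le, hθ.2.le⟩
          ⟨le_refl 0, Real.pi_pos.le⟩ (by rw [Real.cos_zero, h])
        exact hθ.1.ne' this

lemma set_integral_entropy_eq :
    (∫ lam in Set.Ioo (-1 : ℝ) 1,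
        (((1 + lam) / 2) * Real.log ((1 + lam) / 2)
          + ((1 - lam) / 2) * Real.log ((1 - lam) / 2)) / Real.sqrt (1 - lam ^ 2))
      = ∫ θ in Set.Ioo (0:ℝ) Real.pi, entH θ := by
  have hcov := integral_image_eq_integral_abs_deriv_smul (s := Set.Ioo (-1:ℝ) 1)
    (f := Real.arccos) (f' := fun lam => -(1 / Real.sqrt (1 - lam ^ 2)))
    measurableSet_Ioo
    (fun lam hlam => (Real.hasDerivAt_arccos (by linarith [hlam.1]) (by linarith [hlam.2])).hasDerivWithinAt)
    (Real.arccos_injOn.mono (Set.Ioo_subset_Icc_self)) entH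
  rw [arccos_image] at hcov
  rw [hcov]
  apply setIntegral_congr_fun measurableSet_Ioo
  intro lam hlam
  have h1 : (0:ℝ) < 1 - lam ^ 2 := by nlinarith [hlam.1, hlam.2]
  have hsq : 0 < Real.sqrt (1 - lam ^ 2) := Real.sqrt_pos.mpr h1
  have hcos : Real.cos (Real.arccos lam) = lam := Real.cos_arccos (by linarith [hlam.1]) (by linarith [hlam.2])
  simp only [entH, hcos, smul_eq_mul, abs_neg, abs_div, abs_one]
  rw [abs_of_pos hsq]
  field_simp

/-- `(−1/π) ∫_{−1}^{1} [((1+λ)/2)·ln((1+λ)/2) + ((1−λ)/2)·ln((1−λ)/2)] / √(1−λ²) dλ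
       = 2 ln 2 − 1`. -/
theorem entropy_integral_value :
    (-1 / Real.pi) *
        ∫ lam in Set.Ioo (-1 : ℝ) 1,
          (((1 + lam) / 2) * Real.log ((1 + lam) / 2)
            + ((1 - lam) / 2) * Real.log ((1 - lam) / 2)) / Real.sqrt (1 - lam ^ 2)
      = 2 * Real.log 2 - 1 := by
  rw [set_integral_entropy_eq]
  have h1 : (∫ θ in Set.Ioo (0:ℝ) Real.pi, entH θ) = ∫ θ in (0:ℝ)..Real.pi, entH θ := by
    rw [intervalIntegral.integral_of_le Real.pi_pos.le, integral_Ioc_eq_integral_Ioo]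
  rw [h1, integral_entH]
  have hpi : Real.pi ≠ 0 := Real.pi_ne_zero
  field_simp
  ring
end

section
/- Let m ∈ ℕ with m ≥ 1, set M = ⌊(m−1)/2⌋, and let z ∈ ℂ with Re z ≠ 0. Then Σ_{ℓ=1}^{m} (sin(ℓπ/2)/ℓ)·z^ℓ = Σ_{k=0}^{M} (−1)^k z^{2k+1}/(2k+1) = (1/(2i))·Log((z−i)/(z+i)) + (π/2)·sgn(Re z) + (−1)^M ∫₀^z y^{2M+2}/(1+y²) dy, where the integral is taken along the straight segment from 0 to z (which avoids ±i since Re z ≠ 0), Log is the principal branch of the complex logarithm (note (z−i)/(z+i) ∉ (−∞,0] since z ∉ [−i,i]), and sgn(Re z) = 1 if Re z > 0 and −1 if Re z < 0. -/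
open Complex intervalIntegral

lemma fm_log_sub_log {a b : ℂ} (ha : 0 < a.re) (hb : 0 < b.re) :
    Complex.log a - Complex.log b = Complex.log (a / b) := by
  have ha0 : a ≠ 0 := fun h => by simp [h] at ha
  have hb0 : b ≠ 0 := fun h => by simp [h] at hb
  have h1 : |a.arg| < Real.pi / 2 := Complex.abs_arg_lt_pi_div_two_iff.mpr (Or.inl ha)
  have h2 : |b.arg| < Real.pi / 2 := Complex.abs_arg_lt_pi_div_two_iff.mpr (Or.inl hb)
  rw [abs_lt] at h1 h2
  have him : (Complex.log a - Complex.log b).im = a.arg - b.arg := by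
    simp [Complex.log_im]
  have key : Complex.log (Complex.exp (Complex.log a - Complex.log b))
      = Complex.log a - Complex.log b :=
    Complex.log_exp (by rw [him]; linarith) (by rw [him]; linarith)
  rw [Complex.exp_sub, Complex.exp_log ha0, Complex.exp_log hb0] at key
  exact key.symm

lemma fm_denom_ne (z : ℂ) (hz : z.re ≠ 0) (t : ℝ) : (1 : ℂ) + ((t:ℂ)*z)^2 ≠ 0 := by
  intro h
  have h2 : ((t:ℂ)*z - Complex.I) * ((t:ℂ)*z + Complex.I) = 0 := by
    linear_combination h - Complex.I_sq
  have hre : t * z.re = 0 := by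
    rcases mul_eq_zero.mp h2 with h3 | h3
    · simpa using congrArg Complex.re h3
    · simpa using congrArg Complex.re h3
  have ht : t = 0 := by
    rcases mul_eq_zero.mp hre with h4 | h4
    · exact h4
    · exact absurd h4 hz
  rw [ht] at h
  norm_num at h

lemma fm_integral_pow (j : ℕ) : (∫ t in (0:ℝ)..1, (t:ℂ)^j) = 1/((j:ℂ)+1) := by
  have h : ∀ t : ℝ, (t:ℂ)^j = ((t^j : ℝ) : ℂ) := fun t => by push_cast; ring
  simp only [h]
  rw [intervalIntegral.integral_ofReal, integral_pow]
  push_cast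
  norm_num

lemma fm_slit_helper {t : ℝ} (ht : 0 ≤ t) {z c : ℂ} (hzre : 0 < z.re)
    (hcre : c.re = 0) (hcim : c.im ≠ 0) : (t:ℂ)*z + c ∈ Complex.slitPlane := by
  rcases ht.eq_or_lt with h | h
  · right
    rw [← h]
    simpa using hcim
  · left
    have : ((t:ℂ)*z + c).re = t * z.re := by simp [hcre]
    rw [this]
    exact mul_pos h hzre

lemma fm_ftc (z : ℂ) (hz : z.re ≠ 0) :
    (∫ t in (0:ℝ)..1, z / (1 + ((t:ℂ)*z)^2))
      = (1 / (2*Complex.I)) * Complex.log ((z - Complex.I)/(z + Complex.I))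
        + ((Real.pi : ℂ)/2) * (if 0 < z.re then 1 else -1) := by
  have hcont : Continuous fun t : ℝ => z / (1 + ((t:ℂ)*z)^2) :=
    continuous_const.div (by fun_prop) (fm_denom_ne z hz)
  have hint : IntervalIntegrable (fun t : ℝ => z / (1 + ((t:ℂ)*z)^2))
      MeasureTheory.volume 0 1 := hcont.intervalIntegrable 0 1
  rcases lt_or_gt_of_ne hz with hneg | hpos
  · -- z.re < 0
    have hprod : ∀ t : ℝ, (Complex.I - (t:ℂ)*z) * (-Complex.I - (t:ℂ)*z)
        = 1 + ((t:ℂ)*z)^2 := fun t => by linear_combination -Complex.I_sq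
    have hm : ∀ t : ℝ, Complex.I - (t:ℂ)*z ≠ 0 := fun t h =>
      fm_denom_ne z hz t (by rw [← hprod t, h, zero_mul])
    have hp : ∀ t : ℝ, -Complex.I - (t:ℂ)*z ≠ 0 := fun t h =>
      fm_denom_ne z hz t (by rw [← hprod t, h, mul_zero])
    have hderiv : ∀ t ∈ Set.uIcc (0:ℝ) 1,
        HasDerivAt (fun t : ℝ => (1/(2*Complex.I)) *
            (Complex.log (Complex.I - (t:ℂ)*z) - Complex.log (-Complex.I - (t:ℂ)*z)))
          (z / (1 + ((t:ℂ)*z)^2)) t := by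
      intro t ht
      rw [Set.uIcc_of_le (by norm_num : (0:ℝ) ≤ 1)] at ht
      have mem1 : Complex.I - (t:ℂ)*z ∈ Complex.slitPlane := by
        have : Complex.I - (t:ℂ)*z = (t:ℂ)*(-z) + Complex.I := by ring
        rw [this]
        exact fm_slit_helper ht.1 (by simpa using hneg) (by simp) (by simp)
      have mem2 : -Complex.I - (t:ℂ)*z ∈ Complex.slitPlane := by
        have : -Complex.I - (t:ℂ)*z = (t:ℂ)*(-z) + (-Complex.I) := by ring
        rw [this]
        exact fm_slit_helper ht.1 (by simpa using hneg) (by simp) (by simp)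
      have hb1 : HasDerivAt (fun w : ℂ => Complex.I - w*z) (-z) (t:ℂ) := by
        simpa using ((hasDerivAt_id ((t:ℂ))).mul_const z).const_sub Complex.I
      have hb2 : HasDerivAt (fun w : ℂ => -Complex.I - w*z) (-z) (t:ℂ) := by
        simpa using ((hasDerivAt_id ((t:ℂ))).mul_const z).const_sub (-Complex.I)
      have hl1 : HasDerivAt (fun w : ℂ => Complex.log (Complex.I - w*z))
          ((Complex.I - (t:ℂ)*z)⁻¹ * (-z)) (t:ℂ) :=
        HasDerivAt.comp (h₂ := Complex.log) (t:ℂ) (Complex.hasDerivAt_log mem1) hb1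
      have hl2 : HasDerivAt (fun w : ℂ => Complex.log (-Complex.I - w*z))
          ((-Complex.I - (t:ℂ)*z)⁻¹ * (-z)) (t:ℂ) :=
        HasDerivAt.comp (h₂ := Complex.log) (t:ℂ) (Complex.hasDerivAt_log mem2) hb2
      have h1 := hl1.comp_ofReal
      have h2 := hl2.comp_ofReal
      have := (h1.sub h2).const_mul (1/(2*Complex.I))
      convert this using 1
      case e'_9 =>
        have e1 := mul_inv_cancel₀ (hm t)
        have e2 := mul_inv_cancel₀ (hp t)
        have e3 : (2*Complex.I) * (2*Complex.I)⁻¹ = 1 := mul_inv_cancel₀ (by simp)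
        rw [← hprod t, div_eq_iff (mul_ne_zero (hm t) (hp t))]
        linear_combination (-z) * e3 + ((2*Complex.I)⁻¹ * z * (-Complex.I - (t:ℂ)*z)) * e1 - ((2*Complex.I)⁻¹ * z * (Complex.I - (t:ℂ)*z)) * e2
      all_goals rfl
    rw [integral_eq_sub_of_hasDerivAt hderiv hint]
    rw [if_neg (by simpa using hneg.not_gt)]
    push_cast
    simp only [one_mul, zero_mul, zero_sub, sub_zero, zero_add]
    rw [fm_log_sub_log (by simpa using hneg) (by simpa using hneg)]
    have hratio : (Complex.I - z) / (-Complex.I - z) = (z - Complex.I)/(z + Complex.I) := by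
      rw [show Complex.I - z = -(z - Complex.I) by ring,
        show -Complex.I - z = -(z + Complex.I) by ring, neg_div_neg_eq]
    rw [hratio, Complex.log_I, Complex.log_neg_I]
    field_simp
    ring
  · -- 0 < z.re
    have hprod : ∀ t : ℝ, ((t:ℂ)*z - Complex.I) * ((t:ℂ)*z + Complex.I)
        = 1 + ((t:ℂ)*z)^2 := fun t => by linear_combination -Complex.I_sq
    have hm : ∀ t : ℝ, (t:ℂ)*z - Complex.I ≠ 0 := fun t h =>
      fm_denom_ne z hz t (by rw [← hprod t, h, zero_mul])
    have hp : ∀ t : ℝ, (t:ℂ)*z + Complex.I ≠ 0 := fun t h =>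
      fm_denom_ne z hz t (by rw [← hprod t, h, mul_zero])
    have hderiv : ∀ t ∈ Set.uIcc (0:ℝ) 1,
        HasDerivAt (fun t : ℝ => (1/(2*Complex.I)) *
            (Complex.log ((t:ℂ)*z - Complex.I) - Complex.log ((t:ℂ)*z + Complex.I)))
          (z / (1 + ((t:ℂ)*z)^2)) t := by
      intro t ht
      rw [Set.uIcc_of_le (by norm_num : (0:ℝ) ≤ 1)] at ht
      have mem1 : (t:ℂ)*z - Complex.I ∈ Complex.slitPlane := by
        have : (t:ℂ)*z - Complex.I = (t:ℂ)*z + (-Complex.I) := by ring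
        rw [this]
        exact fm_slit_helper ht.1 hpos (by simp) (by simp)
      have mem2 : (t:ℂ)*z + Complex.I ∈ Complex.slitPlane :=
        fm_slit_helper ht.1 hpos (by simp) (by simp)
      have hb1 : HasDerivAt (fun w : ℂ => w*z - Complex.I) z (t:ℂ) := by
        simpa using ((hasDerivAt_id ((t:ℂ))).mul_const z).sub_const Complex.I
      have hb2 : HasDerivAt (fun w : ℂ => w*z + Complex.I) z (t:ℂ) := by
        simpa using ((hasDerivAt_id ((t:ℂ))).mul_const z).add_const Complex.I
      have hl1 : HasDerivAt (fun w : ℂ => Complex.log (w*z - Complex.I))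
          (((t:ℂ)*z - Complex.I)⁻¹ * z) (t:ℂ) :=
        HasDerivAt.comp (h₂ := Complex.log) (t:ℂ) (Complex.hasDerivAt_log mem1) hb1
      have hl2 : HasDerivAt (fun w : ℂ => Complex.log (w*z + Complex.I))
          (((t:ℂ)*z + Complex.I)⁻¹ * z) (t:ℂ) :=
        HasDerivAt.comp (h₂ := Complex.log) (t:ℂ) (Complex.hasDerivAt_log mem2) hb2
      have h1 := hl1.comp_ofReal
      have h2 := hl2.comp_ofReal
      have := (h1.sub h2).const_mul (1/(2*Complex.I))
      convert this using 1
      case e'_9 =>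
        have e1 := mul_inv_cancel₀ (hm t)
        have e2 := mul_inv_cancel₀ (hp t)
        have e3 : (2*Complex.I) * (2*Complex.I)⁻¹ = 1 := mul_inv_cancel₀ (by simp)
        rw [← hprod t, div_eq_iff (mul_ne_zero (hm t) (hp t))]
        linear_combination (-z) * e3 - ((2*Complex.I)⁻¹ * z * ((t:ℂ)*z + Complex.I)) * e1 + ((2*Complex.I)⁻¹ * z * ((t:ℂ)*z - Complex.I)) * e2
      all_goals rfl
    rw [integral_eq_sub_of_hasDerivAt hderiv hint]
    rw [if_pos hpos]
    push_cast
    simp only [one_mul, zero_mul, zero_sub, sub_zero, zero_add]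
    rw [fm_log_sub_log (by simpa using hpos) (by simpa using hpos)]
    rw [Complex.log_I, Complex.log_neg_I]
    field_simp
    ring

lemma fm_sum_sin (z : ℂ) : ∀ m : ℕ, 1 ≤ m →
    ∑ ℓ ∈ Finset.Icc 1 m, ((Real.sin (ℓ * Real.pi / 2) : ℂ) / ℓ) * z ^ ℓ
      = ∑ k ∈ Finset.range ((m - 1) / 2 + 1),
          (-1 : ℂ) ^ k * z ^ (2 * k + 1) / (2 * k + 1) := by
  intro m
  induction m with
  | zero => intro h; exact absurd h (by norm_num)
  | succ n ih =>
    intro _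
    rcases Nat.lt_or_ge n 1 with h1 | h1
    · have hn : n = 0 := by omega
      subst hn
      norm_num [Real.sin_pi_div_two]
    · rw [Finset.sum_Icc_succ_top (by omega : 1 ≤ n+1), ih h1]
      rcases Nat.even_or_odd (n+1) with ⟨j, hj⟩ | ⟨j, hj⟩
      · have hj' : n + 1 = 2*j := by omega
        have hsin : Real.sin ((n+1 : ℕ) * Real.pi / 2) = 0 := by
          have harg : ((n+1 : ℕ):ℝ) * Real.pi / 2 = (j:ℝ) * Real.pi := by
            push_cast [hj']; ring
          rw [harg]
          exact Real.sin_nat_mul_pi j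
        have hM : (n+1-1)/2 = (n-1)/2 := by omega
        rw [hM, hsin]
        simp
      · have hj' : n + 1 = 2*j + 1 := by omega
        have hM1 : (n+1-1)/2 = j := by omega
        have hM2 : (n-1)/2 + 1 = j := by omega
        have hsin : Real.sin ((n+1 : ℕ) * Real.pi / 2) = (-1)^j := by
          have harg : ((n+1 : ℕ):ℝ) * Real.pi / 2 = (j:ℝ) * Real.pi + Real.pi/2 := by
            push_cast [hj']; ring
          have hcos : Real.cos ((j:ℝ) * Real.pi) = (-1)^j := by
            simpa using Real.cos_nat_mul_pi_sub 0 j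
          rw [harg, Real.sin_add, Real.sin_nat_mul_pi, Real.sin_pi_div_two,
            Real.cos_pi_div_two, hcos]
          ring
        rw [hM1, hM2, Finset.sum_range_succ, hsin]
        congr 1
        rw [show n + 1 = 2*j + 1 from hj']
        push_cast
        ring

lemma fm_sum_as_integral (n : ℕ) (z : ℂ) :
    ∑ k ∈ Finset.range (n+1), (-1 : ℂ) ^ k * z ^ (2 * k + 1) / (2 * k + 1)
      = ∫ t in (0:ℝ)..1,
          ∑ k ∈ Finset.range (n+1), ((-1 : ℂ) ^ k * z ^ (2 * k + 1)) * (t:ℂ)^(2*k) := by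
  rw [intervalIntegral.integral_finset_sum
    (fun k _ => (Continuous.intervalIntegrable (by fun_prop) 0 1))]
  refine Finset.sum_congr rfl fun k _ => ?_
  rw [intervalIntegral.integral_const_mul, fm_integral_pow]
  push_cast
  ring

lemma fm_pointwise (n : ℕ) (z : ℂ) (hz : z.re ≠ 0) (t : ℝ) :
    ∑ k ∈ Finset.range (n+1), ((-1 : ℂ) ^ k * z ^ (2 * k + 1)) * (t:ℂ)^(2*k)
      = z / (1 + ((t:ℂ)*z)^2)
        + ((-1 : ℂ)^n * z) * (((t:ℂ)*z)^(2*n+2) / (1 + ((t:ℂ)*z)^2)) := by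
  have hd := fm_denom_ne z hz t
  have hr1 : (-(((t:ℂ)*z)^2)) ≠ 1 := by
    intro h
    apply hd
    linear_combination -h
  have hterm : ∀ k, ((-1 : ℂ) ^ k * z ^ (2 * k + 1)) * (t:ℂ)^(2*k)
      = z * (-(((t:ℂ)*z)^2))^k := by
    intro k
    rw [show (-(((t:ℂ)*z)^2)) = (-1) * ((t:ℂ)*z)^2 by ring, mul_pow, ← pow_mul, mul_pow]
    ring
  simp only [hterm]
  rw [← Finset.mul_sum, geom_sum_eq hr1]
  have hd' : -(((t:ℂ)*z)^2) - 1 ≠ 0 := by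
    intro h
    apply hd
    linear_combination -h
  rw [mul_div_assoc', div_eq_iff hd']
  linear_combination (z + (-1 : ℂ)^n * z * ((t:ℂ)*z)^(2*n+2)) * mul_inv_cancel₀ hd

lemma fm_part2 (n : ℕ) (z : ℂ) (hz : z.re ≠ 0) :
    ∑ k ∈ Finset.range (n+1), (-1 : ℂ) ^ k * z ^ (2 * k + 1) / (2 * k + 1)
      = (1 / (2 * Complex.I)) * Complex.log ((z - Complex.I) / (z + Complex.I))
        + ((Real.pi : ℂ) / 2) * (if 0 < z.re then 1 else -1)
        + (-1 : ℂ) ^ n * z *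
            ∫ t in (0 : ℝ)..1, ((t : ℂ) * z) ^ (2 * n + 2) / (1 + ((t : ℂ) * z) ^ 2) := by
  have hc1 : Continuous fun t : ℝ => z / (1 + ((t:ℂ)*z)^2) :=
    continuous_const.div (by fun_prop) (fm_denom_ne z hz)
  have hc2 : Continuous fun t : ℝ => ((t:ℂ)*z)^(2*n+2) / (1 + ((t:ℂ)*z)^2) :=
    Continuous.div (by fun_prop) (by fun_prop) (fm_denom_ne z hz)
  rw [fm_sum_as_integral n z]
  have heq : (fun t : ℝ => ∑ k ∈ Finset.range (n+1), ((-1 : ℂ)^k * z^(2*k+1)) * (t:ℂ)^(2*k))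
      = fun t : ℝ => z / (1 + ((t:ℂ)*z)^2)
          + ((-1:ℂ)^n * z) * (((t:ℂ)*z)^(2*n+2) / (1 + ((t:ℂ)*z)^2)) :=
    funext (fm_pointwise n z hz)
  rw [heq, intervalIntegral.integral_add (hc1.intervalIntegrable 0 1)
      ((hc2.intervalIntegrable 0 1).const_mul ((-1:ℂ)^n * z)),
    intervalIntegral.integral_const_mul, fm_ftc z hz]

/-- for `m ≥ 1`, `M = ⌊(m−1)/2⌋` and `z ∈ ℂ` with `Re z ≠ 0`,
    `Σ_{ℓ=1}^{m} (sin(ℓπ/2)/ℓ)·z^ℓ = Σ_{k=0}^{M} (−1)^k z^{2k+1}/(2k+1)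
      = (1/(2i))·Log((z−i)/(z+i)) + (π/2)·sgn(Re z)
        + (−1)^M ∫₀^z y^{2M+2}/(1+y²) dy`,
    the last integral being taken along the straight segment from `0` to `z`
    (parametrised by `y = tz`, `t ∈ [0,1]`). -/
theorem fm_decomposition (m : ℕ) (hm : 1 ≤ m) (z : ℂ) (hz : z.re ≠ 0) :
    (∑ ℓ ∈ Finset.Icc 1 m, ((Real.sin (ℓ * Real.pi / 2) : ℂ) / ℓ) * z ^ ℓ
      = ∑ k ∈ Finset.range ((m - 1) / 2 + 1),
          (-1 : ℂ) ^ k * z ^ (2 * k + 1) / (2 * k + 1)) ∧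
    (∑ k ∈ Finset.range ((m - 1) / 2 + 1),
        (-1 : ℂ) ^ k * z ^ (2 * k + 1) / (2 * k + 1)
      = (1 / (2 * Complex.I)) * Complex.log ((z - Complex.I) / (z + Complex.I))
        + ((Real.pi : ℂ) / 2) * (if 0 < z.re then 1 else -1)
        + (-1 : ℂ) ^ ((m - 1) / 2) * z *
            ∫ t in (0 : ℝ)..1,
              ((t : ℂ) * z) ^ (2 * ((m - 1) / 2) + 2) / (1 + ((t : ℂ) * z) ^ 2)) := by
  exact ⟨fm_sum_sin z m hm, fm_part2 ((m - 1) / 2) z hz⟩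
end
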